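/- arXiv:2310.16657 — 7 statements merged into one kernel-verified Lean document; each statement's English description precedes it below -/
import Mathlib

section
/- For a simple symmetric random walk on the integers started at 0, and any n ≥ 1, the probability that S_j > 0 for all 1 ≤ j ≤ 2n equals one half of the probability that S_{2n} = 0. -/
open Finset

private def stp (b : Bool) : ℤ := if b then 1 else -1

private def psum {m : ℕ} (ε : Fin m → Bool) (j : ℕ) : ℤ :=
  ∑ i : Fin m, if (i : ℕ) < j then stp (ε i) else 0

private def V : ℕ → ℕ → ℕ
  | 0, _ => 1
  | m+1, 0 => V m 1
  | m+1, a+1 => V m (a+2) + V m a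

private def F (m a : ℕ) : ℕ := ∑ k ∈ Finset.range (a+1), m.choose ((m - a + 1)/2 + k)

private lemma F_eq_two_pow {m a : ℕ} (h : m ≤ a) : F m a = 2^m := by
  unfold F
  have hs : (m - a + 1)/2 = 0 := by omega
  rw [hs]
  simp only [zero_add]
  rw [← Nat.sum_range_choose m]
  exact (Finset.sum_subset (Finset.range_subset_range.2 (by omega))
    (fun x _ hx => Nat.choose_eq_zero_of_lt (by simp at hx ⊢; omega))).symm

private lemma V_eq_F : ∀ m a, V m a = F m a := by
  intro m
  induction m with
  | zero => intro a; show 1 = F 0 a; rw [F_eq_two_pow (Nat.zero_le a)]; rfl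
  | succ m ih =>
    intro a
    match a with
    | 0 =>
      show V m 1 = F (m+1) 0
      rw [ih 1]
      have h1 : (m - 1 + 1)/2 = m/2 := by omega
      have h2 : (m + 1 - 0 + 1)/2 = m/2 + 1 := by omega
      unfold F
      rw [h1, h2]
      simp [Finset.sum_range_succ, Nat.choose_succ_succ]
    | a+1 =>
      show V m (a+2) + V m a = F (m+1) (a+1)
      rw [ih, ih]
      by_cases hma : m ≤ a
      · rw [F_eq_two_pow hma, F_eq_two_pow (by omega), F_eq_two_pow (by omega : m+1 ≤ a+1)]
        ring
      · -- a < m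
        have ha : a < m := by omega
        obtain ⟨t, ht⟩ : ∃ t, (m - a + 1)/2 = t + 1 := ⟨(m-a+1)/2 - 1, by omega⟩
        have hs' : (m + 1 - (a+1) + 1)/2 = t + 1 := by omega
        have hs2 : (m - (a+2) + 1)/2 = t := by omega
        have hs0 : (m - a + 1)/2 = t + 1 := ht
        unfold F
        rw [hs', hs2, hs0]
        have hsplit : ∀ k, (m+1).choose (t + 1 + k) = m.choose (t + k) + m.choose (t + 1 + k) := by
          intro k
          have : t + 1 + k = (t + k) + 1 := by omega
          rw [this, Nat.choose_succ_succ]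
        calc (∑ k ∈ range (a+2+1), m.choose (t + k)) + ∑ k ∈ range (a+1), m.choose (t+1+k)
            = ((∑ k ∈ range (a+2), m.choose (t + k)) + m.choose (t + (a+2)))
              + ∑ k ∈ range (a+1), m.choose (t+1+k) := by rw [Finset.sum_range_succ]
          _ = (∑ k ∈ range (a+2), m.choose (t + k))
              + ((∑ k ∈ range (a+1), m.choose (t+1+k)) + m.choose (t+1+(a+1))) := by
                have : t + (a+2) = t + 1 + (a+1) := by omega
                rw [this]; ring
          _ = (∑ k ∈ range (a+2), m.choose (t + k)) + ∑ k ∈ range (a+2), m.choose (t+1+k) := by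
                rw [← Finset.sum_range_succ]
          _ = ∑ k ∈ range (a+2), (m.choose (t + k) + m.choose (t+1+k)) := by
                rw [Finset.sum_add_distrib]
          _ = ∑ k ∈ range (a+1+1), (m+1).choose (t + 1 + k) := by
                apply Finset.sum_congr rfl; intro k _; rw [hsplit k]

private lemma psum_zero {m : ℕ} (ε : Fin m → Bool) : psum ε 0 = 0 := by
  simp [psum]

private lemma psum_cons {m : ℕ} (b : Bool) (ε : Fin m → Bool) (j : ℕ) :
    psum (Fin.cons b ε) (j+1) = stp b + psum ε j := by
  unfold psum
  rw [Fin.sum_univ_succ]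
  simp [Fin.cons_succ]

private lemma psum_range {m : ℕ} (ε : Fin m → Bool) :
    ∀ j, (hj : j ≤ m) → psum ε j = ∑ i ∈ Finset.range j, (if h : i < m then stp (ε ⟨i, h⟩) else 0) := by
  intro j
  induction j with
  | zero => intro _; simp [psum]
  | succ j ihj =>
    intro hj
    have h1 : ∀ i : Fin m, (if (i:ℕ) < j + 1 then stp (ε i) else 0)
        = (if (i:ℕ) < j then stp (ε i) else 0) + (if (i:ℕ) = j then stp (ε i) else 0) := by
      intro i
      rcases lt_trichotomy (i:ℕ) j with h|h|h
      · rw [if_pos (by omega : (i:ℕ) < j + 1), if_pos h, if_neg (by omega)]; ring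
      · rw [if_pos (by omega : (i:ℕ) < j + 1), if_neg (by omega), if_pos h]; ring
      · rw [if_neg (by omega : ¬ (i:ℕ) < j + 1), if_neg (by omega), if_neg (by omega)]; ring
    have h2 : (∑ i : Fin m, if (i:ℕ) = j then stp (ε i) else 0) = stp (ε ⟨j, by omega⟩) := by
      rw [Finset.sum_eq_single (⟨j, by omega⟩ : Fin m)]
      · simp
      · intro i _ hi
        have : (i : ℕ) ≠ j := fun h => hi (by ext; exact h)
        simp [this]
      · simp
    have hps : psum ε (j+1) = psum ε j + stp (ε ⟨j, by omega⟩) := by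
      unfold psum
      rw [Finset.sum_congr rfl (fun i _ => h1 i), Finset.sum_add_distrib, h2]
    rw [hps, ihj (by omega), Finset.sum_range_succ, dif_pos (by omega : j < m)]

private lemma card_split {m : ℕ} (Q : (Fin (m+1) → Bool) → Prop) [DecidablePred Q] :
    (Finset.univ.filter Q).card
      = (Finset.univ.filter (fun δ : Fin m → Bool => Q (Fin.cons true δ))).card
        + (Finset.univ.filter (fun δ : Fin m → Bool => Q (Fin.cons false δ))).card := by
  rw [Finset.card_filter, Finset.card_filter, Finset.card_filter]
  rw [← Fintype.sum_equiv (Fin.consEquiv (fun _ => Bool))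
    (fun p : Bool × (Fin m → Bool) => if Q (Fin.cons p.1 p.2) then 1 else 0)
    (fun ε => if Q ε then 1 else 0) (fun p => rfl)]
  rw [Fintype.sum_prod_type, Fintype.sum_bool]

private lemma card_nonneg_paths : ∀ m, ∀ a : ℕ,
    (Finset.univ.filter (fun ε : Fin m → Bool =>
      ∀ j, j ≤ m → 0 ≤ (a:ℤ) + psum ε j)).card = V m a := by
  intro m
  induction m with
  | zero =>
    intro a
    rw [Finset.filter_true_of_mem]
    · simp [V]
    · intro ε _ j hj
      interval_cases j
      simp [psum_zero]
  | succ m ih =>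
    intro a
    rw [card_split]
    have htrue : (Finset.univ.filter (fun δ : Fin m → Bool =>
        ∀ j, j ≤ m+1 → 0 ≤ (a:ℤ) + psum (Fin.cons true δ) j)).card = V m (a+1) := by
      rw [← ih (a+1)]
      congr 1
      ext δ
      simp only [Finset.mem_filter, Finset.mem_univ, true_and]
      constructor
      · intro H j hj
        have h1 := H (j+1) (by omega)
        rw [psum_cons] at h1
        simp only [stp, if_pos] at h1
        push_cast
        linarith
      · intro H j hj
        match j with
        | 0 => simp [psum_zero]
        | j+1 =>
          have h1 := H j (by omega)
          rw [psum_cons]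
          simp only [stp, if_pos]
          push_cast at h1
          linarith
    match a with
    | 0 =>
      have hfalse : (Finset.univ.filter (fun δ : Fin m → Bool =>
          ∀ j, j ≤ m+1 → 0 ≤ ((0:ℕ):ℤ) + psum (Fin.cons false δ) j)).card = 0 := by
        rw [Finset.card_eq_zero, Finset.filter_eq_empty_iff]
        intro δ _ H
        have h1 := H 1 (by omega)
        rw [psum_cons, psum_zero] at h1
        simp [stp] at h1
      rw [htrue, hfalse]
      show V m 1 + 0 = V (m+1) 0
      simp [V]
    | c+1 =>
      have hfalse : (Finset.univ.filter (fun δ : Fin m → Bool =>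
          ∀ j, j ≤ m+1 → 0 ≤ ((c+1:ℕ):ℤ) + psum (Fin.cons false δ) j)).card = V m c := by
        rw [← ih c]
        congr 1
        ext δ
        simp only [Finset.mem_filter, Finset.mem_univ, true_and]
        constructor
        · intro H j hj
          have h1 := H (j+1) (by omega)
          rw [psum_cons] at h1
          simp only [stp, if_neg] at h1
          push_cast at h1 ⊢
          linarith
        · intro H j hj
          match j with
          | 0 => simp [psum_zero]; positivity
          | j+1 =>
            have h1 := H j (by omega)
            rw [psum_cons]
            simp only [stp]
            push_cast at h1 ⊢
            linarith
      rw [htrue, hfalse]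
      show V m (c+2) + V m c = V (m+1) (c+1)
      simp [V]

private lemma card_pos_paths (m : ℕ) :
    (Finset.univ.filter (fun ε : Fin (m+1) → Bool =>
      ∀ j, j ≤ m+1 → 1 ≤ j → 0 < psum ε j)).card = V m 0 := by
  rw [card_split]
  have htrue : (Finset.univ.filter (fun δ : Fin m → Bool =>
      ∀ j, j ≤ m+1 → 1 ≤ j → 0 < psum (Fin.cons true δ) j)).card = V m 0 := by
    rw [← card_nonneg_paths m 0]
    congr 1
    ext δ
    simp only [Finset.mem_filter, Finset.mem_univ, true_and]
    constructor
    · intro H j hj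
      have h1 := H (j+1) (by omega) (by omega)
      rw [psum_cons] at h1
      simp only [stp, if_pos] at h1 ⊢
      push_cast
      linarith
    · intro H j hj h1j
      match j with
      | j+1 =>
        have h1 := H j (by omega)
        rw [psum_cons]
        simp only [stp, if_pos]
        push_cast at h1
        linarith
  have hfalse : (Finset.univ.filter (fun δ : Fin m → Bool =>
      ∀ j, j ≤ m+1 → 1 ≤ j → 0 < psum (Fin.cons false δ) j)).card = 0 := by
    rw [Finset.card_eq_zero, Finset.filter_eq_empty_iff]
    intro δ _ H
    have h1 := H 1 (by omega) (by omega)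
    rw [psum_cons, psum_zero] at h1
    simp [stp] at h1
  rw [htrue, hfalse]
  omega

private def boolFinsetEquiv (N : ℕ) : (Fin N → Bool) ≃ Finset (Fin N) where
  toFun ε := Finset.univ.filter (fun i => ε i = true)
  invFun s := fun i => decide (i ∈ s)
  left_inv ε := by funext i; by_cases h : ε i = true <;> simp [h]
  right_inv s := by ext i; simp

private lemma card_zero_end (N : ℕ) (n : ℕ) (hN : N = 2 * n) :
    (Finset.univ.filter (fun ε : Fin N → Bool => psum ε N = 0)).card = N.choose n := by
  have hps : ∀ ε : Fin N → Bool, psum ε N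
      = 2 * ((Finset.univ.filter (fun i => ε i = true)).card : ℤ) - N := by
    intro ε
    have h1 : ∀ i : Fin N, (if (i:ℕ) < N then stp (ε i) else 0)
        = (if ε i = true then (2:ℤ) else 0) - 1 := by
      intro i
      rw [if_pos i.isLt]
      by_cases h : ε i = true <;> simp [h, stp]
    unfold psum
    rw [Finset.sum_congr rfl (fun i _ => h1 i), Finset.sum_sub_distrib]
    rw [← Finset.sum_filter]
    simp [Finset.card_univ, mul_comm]
  have hiff : ∀ ε : Fin N → Bool,
      (psum ε N = 0) ↔ ((Finset.univ.filter (fun i => ε i = true)).card = n) := by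
    intro ε
    rw [hps ε]
    constructor
    · intro h; omega
    · intro h; rw [h]; omega
  rw [Finset.filter_congr (fun ε _ => hiff ε)]
  rw [Finset.card_filter]
  rw [Fintype.sum_equiv (boolFinsetEquiv N)
    (fun ε => if (Finset.univ.filter (fun i => ε i = true)).card = n then 1 else 0)
    (fun s : Finset (Fin N) => if s.card = n then 1 else 0) (fun ε => rfl)]
  rw [← Finset.card_filter]
  have : Finset.univ.filter (fun s : Finset (Fin N) => s.card = n)
      = Finset.powersetCard n Finset.univ := by
    ext s
    simp [Finset.mem_powersetCard_univ]
  rw [this, Finset.card_powersetCard]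
  simp

private lemma two_V (n : ℕ) (hn : 1 ≤ n) : 2 * V (2*n - 1) 0 = (2*n).choose n := by
  obtain ⟨m, rfl⟩ : ∃ m, n = m + 1 := ⟨n - 1, by omega⟩
  have h1 : 2*(m+1) - 1 = 2*m + 1 := by omega
  rw [h1, V_eq_F]
  have h2 : F (2*m+1) 0 = (2*m+1).choose (m+1) := by
    unfold F
    rw [Finset.sum_range_one]
    congr 1
    omega
  rw [h2]
  have h3 : 2*(m+1) = (2*m+1) + 1 := by omega
  rw [h3]
  have h4 : (2*m+1+1).choose (m+1) = (2*m+1).choose m + (2*m+1).choose (m+1) :=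
    Nat.choose_succ_succ _ _
  have h5 : (2*m+1).choose m = (2*m+1).choose (m+1) := by
    have := Nat.choose_symm (n := 2*m+1) (k := m+1) (by omega)
    simpa [show 2*m+1 - (m+1) = m by omega] using this
  omega

private lemma card_pos_paths' (N : ℕ) (hN : 1 ≤ N) :
    (Finset.univ.filter (fun ε : Fin N → Bool =>
      ∀ j, j ≤ N → 1 ≤ j → 0 < psum ε j)).card = V (N-1) 0 := by
  obtain ⟨m, rfl⟩ : ∃ m, N = m + 1 := ⟨N - 1, by omega⟩
  simpa using card_pos_paths m

open MeasureTheory ProbabilityTheory Filter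
open scoped ENNReal

theorem stmt1 {Ω : Type*} [MeasurableSpace Ω] (P : Measure Ω) [IsProbabilityMeasure P]
    (X : ℕ → Ω → ℤ) (hX : ∀ i, Measurable (X i))
    (hindep : iIndepFun X P)
    (h1 : ∀ i, P {ω | X i ω = 1} = 1/2)
    (h2 : ∀ i, P {ω | X i ω = -1} = 1/2)
    (S : ℕ → Ω → ℤ) (hS : ∀ n ω, S n ω = ∑ i ∈ Finset.range n, X i ω)
    (n : ℕ) (hn : 1 ≤ n) :
    P {ω | ∀ j, 1 ≤ j → j ≤ 2 * n → 0 < S j ω} = (1 / 2) * P {ω | S (2 * n) ω = 0} := by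
  have hpre : ∀ (i : ℕ) (c : ℤ), X i ⁻¹' {c} = {ω | X i ω = c} := by
    intro i c; ext ω; simp
  -- the bad (null) set
  set B : Set Ω := ⋃ i : ℕ, {ω | X i ω ≠ 1 ∧ X i ω ≠ -1} with hBdef
  have hB : P B = 0 := by
    apply measure_iUnion_null
    intro i
    have hms1 : MeasurableSet {ω | X i ω = 1} := by
      rw [← hpre]; exact hX i (measurableSet_singleton _)
    have hms2 : MeasurableSet {ω | X i ω = -1} := by
      rw [← hpre]; exact hX i (measurableSet_singleton _)
    have hdisj : Disjoint {ω | X i ω = 1} {ω | X i ω = -1} := by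
      rw [Set.disjoint_left]
      intro ω hω1 hω2
      simp only [Set.mem_setOf_eq] at hω1 hω2
      omega
    have hunion : P ({ω | X i ω = 1} ∪ {ω | X i ω = -1}) = 1 := by
      rw [measure_union hdisj hms2, h1, h2]
      rw [ENNReal.div_add_div_same]
      rw [one_add_one_eq_two]
      exact ENNReal.div_self two_ne_zero ENNReal.ofNat_ne_top
    have hcompl : {ω | X i ω ≠ 1 ∧ X i ω ≠ -1} = ({ω | X i ω = 1} ∪ {ω | X i ω = -1})ᶜ := by
      ext ω; simp [not_or]
    rw [hcompl, measure_compl (hms1.union hms2) (measure_ne_top P _), hunion,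
      measure_univ, tsub_self]
  -- sign vector of a sample point
  set Φ : Ω → (Fin (2*n) → Bool) := fun ω i => decide (X (i : ℕ) ω = 1) with hΦdef
  have hXΦ : ∀ ω, ω ∉ B → ∀ i : Fin (2*n), X (i : ℕ) ω = stp (Φ ω i) := by
    intro ω hω i
    simp only [hBdef, Set.mem_iUnion, Set.mem_setOf_eq, not_exists, not_and_or, not_not] at hω
    rcases hω (i : ℕ) with h | h
    · rw [h]; simp [hΦdef, stp, h]
    · rw [h]; simp [hΦdef, stp, h]
  -- cylinders
  set val : (Fin (2*n) → Bool) → ℕ → ℤ :=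
    fun ε i => if h : i < 2*n then stp (ε ⟨i, h⟩) else 1 with hvaldef
  set Cyl : (Fin (2*n) → Bool) → Set Ω :=
    fun ε => ⋂ i ∈ Finset.range (2*n), X i ⁻¹' {val ε i} with hCyldef
  have hCylMeas : ∀ ε, MeasurableSet (Cyl ε) := by
    intro ε
    exact Finset.measurableSet_biInter _ (fun i _ => hX i (measurableSet_singleton _))
  have hCylP : ∀ ε, P (Cyl ε) = (1/2) ^ (2*n) := by
    intro ε
    rw [hCyldef]
    rw [hindep.measure_inter_preimage_eq_mul (Finset.range (2*n))
      (fun i _ => measurableSet_singleton _)]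
    have hfac : ∀ i ∈ Finset.range (2*n), P (X i ⁻¹' {val ε i}) = (1/2 : ℝ≥0∞) := by
      intro i hi
      rw [Finset.mem_range] at hi
      rw [hvaldef]
      simp only [dif_pos hi]
      cases h : (ε ⟨i, hi⟩) with
      | true => simp only [stp, if_pos]; rw [hpre]; exact h1 i
      | false => simp only [stp, Bool.false_eq_true, if_neg]; rw [hpre]; exact h2 i
    rw [Finset.prod_congr rfl hfac, Finset.prod_const, Finset.card_range]
  have hCylDisj : ∀ ε ε' : Fin (2*n) → Bool, ε ≠ ε' → Disjoint (Cyl ε) (Cyl ε') := by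
    intro ε ε' hne
    rw [Set.disjoint_left]
    intro ω hω hω'
    apply hne
    funext i
    have e1 := Set.mem_iInter₂.1 hω (i : ℕ) (Finset.mem_range.2 i.isLt)
    have e2 := Set.mem_iInter₂.1 hω' (i : ℕ) (Finset.mem_range.2 i.isLt)
    simp only [Set.mem_preimage, Set.mem_singleton_iff, hvaldef, dif_pos i.isLt,
      Fin.eta] at e1 e2
    rw [e1] at e2
    cases hε : ε i <;> cases hε' : ε' i <;> rw [hε, hε'] at e2 <;> simp [stp] at e2 <;> rfl
  have hΦCyl : ∀ ω, ω ∉ B → ∀ ε, ω ∈ Cyl ε → Φ ω = ε := by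
    intro ω hω ε hωε
    funext i
    have e1 := Set.mem_iInter₂.1 hωε (i : ℕ) (Finset.mem_range.2 i.isLt)
    simp only [Set.mem_preimage, Set.mem_singleton_iff, hvaldef, dif_pos i.isLt,
      Fin.eta] at e1
    have e2 := hXΦ ω hω i
    rw [e1] at e2
    cases hε : ε i <;> cases hφ : Φ ω i <;> rw [hε] at e2 <;> rw [hφ] at e2 <;>
      simp [stp] at e2 <;> rfl
  -- the master counting identity
  have key : ∀ (Pred : (Fin (2*n) → Bool) → Prop) [DecidablePred Pred] (A : Set Ω),
      (∀ ω, ω ∉ B → (ω ∈ A ↔ Pred (Φ ω))) →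
      P A = ((Finset.univ.filter Pred).card : ℝ≥0∞) * (1/2) ^ (2*n) := by
    intro Pred inst A hiff
    have hAB : A \ B = (⋃ ε ∈ Finset.univ.filter Pred, Cyl ε) \ B := by
      ext ω
      simp only [Set.mem_diff, Set.mem_iUnion, Finset.mem_filter, Finset.mem_univ, true_and,
        exists_prop]
      constructor
      · rintro ⟨hA, hnB⟩
        refine ⟨⟨Φ ω, (hiff ω hnB).1 hA, ?_⟩, hnB⟩
        apply Set.mem_iInter₂.2
        intro i hi
        rw [Finset.mem_range] at hi
        simp only [Set.mem_preimage, Set.mem_singleton_iff, hvaldef, dif_pos hi]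
        exact hXΦ ω hnB ⟨i, hi⟩
      · rintro ⟨⟨ε, hPred, hωε⟩, hnB⟩
        refine ⟨?_, hnB⟩
        rw [hiff ω hnB, hΦCyl ω hnB ε hωε]
        exact hPred
    calc P A = P (A \ B) := (measure_diff_null hB).symm
      _ = P ((⋃ ε ∈ Finset.univ.filter Pred, Cyl ε) \ B) := by rw [hAB]
      _ = P (⋃ ε ∈ Finset.univ.filter Pred, Cyl ε) := measure_diff_null hB
      _ = ∑ ε ∈ Finset.univ.filter Pred, P (Cyl ε) := by
            apply measure_biUnion_finset
            · intro ε _ ε' _ hne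
              exact hCylDisj ε ε' hne
            · intro ε _
              exact hCylMeas ε
      _ = ∑ ε ∈ Finset.univ.filter Pred, (1/2 : ℝ≥0∞) ^ (2*n) := by
            exact Finset.sum_congr rfl (fun ε _ => hCylP ε)
      _ = ((Finset.univ.filter Pred).card : ℝ≥0∞) * (1/2) ^ (2*n) := by
            rw [Finset.sum_const, nsmul_eq_mul]
  -- bridge between S and psum
  have hSψ : ∀ ω, ω ∉ B → ∀ j, j ≤ 2*n → S j ω = psum (Φ ω) j := by
    intro ω hω j hj
    rw [hS, psum_range (Φ ω) j hj]
    apply Finset.sum_congr rfl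
    intro i hi
    rw [Finset.mem_range] at hi
    rw [dif_pos (by omega : i < 2*n)]
    exact hXΦ ω hω ⟨i, by omega⟩
  -- the two events
  have hP1 : P {ω | ∀ j, 1 ≤ j → j ≤ 2 * n → 0 < S j ω}
      = ((Finset.univ.filter (fun ε : Fin (2*n) → Bool =>
          ∀ j, j ≤ 2*n → 1 ≤ j → 0 < psum ε j)).card : ℝ≥0∞) * (1/2) ^ (2*n) := by
    apply key
    intro ω hω
    simp only [Set.mem_setOf_eq]
    constructor
    · intro H j hj h1j
      rw [← hSψ ω hω j hj]
      exact H j h1j (by omega)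
    · intro H j h1j hj
      rw [hSψ ω hω j (by omega)]
      exact H j (by omega) h1j
  have hP2 : P {ω | S (2 * n) ω = 0}
      = ((Finset.univ.filter (fun ε : Fin (2*n) → Bool =>
          psum ε (2*n) = 0)).card : ℝ≥0∞) * (1/2) ^ (2*n) := by
    apply key
    intro ω hω
    simp only [Set.mem_setOf_eq]
    rw [hSψ ω hω (2*n) (by omega)]
  rw [hP1, hP2]
  rw [card_pos_paths' (2*n) (by omega), card_zero_end (2*n) n rfl]
  have hv := two_V n hn
  rw [← hv]
  push_cast
  rw [← mul_assoc, ← mul_assoc]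
  congr 1
  have h12 : (1/2 : ℝ≥0∞) * 2 = 1 := by
    rw [one_div, ENNReal.inv_mul_cancel two_ne_zero ENNReal.ofNat_ne_top]
  rw [h12, one_mul]
end

section
/- For a simple symmetric random walk on the integers started at 0, and any n ≥ 1, the probability that S_j ≥ 0 for all 1 ≤ j ≤ 2n equals the probability that S_{2n} = 0. -/
open MeasureTheory ProbabilityTheory Filter
open scoped ENNReal
open Finset

namespace SSRW



def stp (b : Bool) : ℤ := if b then 1 else -1

def psum {m : ℕ} (ε : Fin m → Bool) (j : ℕ) : ℤ :=
  ∑ i : Fin m, if (i : ℕ) < j then stp (ε i) else 0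

def tot {m : ℕ} (ε : Fin m → Bool) : ℤ := ∑ i : Fin m, stp (ε i)

def cnt {m : ℕ} (ε : Fin m → Bool) : ℕ := (univ.filter (fun i => ε i = true)).card

lemma psum_eq_tot {m : ℕ} (ε : Fin m → Bool) {j : ℕ} (h : m ≤ j) : psum ε j = tot ε := by
  unfold psum tot
  refine Finset.sum_congr rfl fun i _ => ?_
  rw [if_pos (lt_of_lt_of_le i.isLt h)]

lemma tot_eq {m : ℕ} (ε : Fin m → Bool) : tot ε = 2 * (cnt ε : ℤ) - m := by
  unfold tot cnt
  have : ∀ b : Bool, stp b = 2 * (if b = true then (1:ℤ) else 0) - 1 := by decide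
  rw [Finset.sum_congr rfl (fun i _ => this (ε i))]
  rw [Finset.sum_sub_distrib, ← Finset.mul_sum, Finset.sum_boole, Finset.sum_const,
    Finset.card_univ, Fintype.card_fin]
  simp

lemma psum_snoc {m : ℕ} (ε : Fin m → Bool) (b : Bool) (j : ℕ) :
    psum (Fin.snoc ε b) j = psum ε j + if m < j then stp b else 0 := by
  unfold psum
  rw [Fin.sum_univ_castSucc]
  simp [Fin.snoc_castSucc, Fin.snoc_last]

lemma cnt_snoc {m : ℕ} (ε : Fin m → Bool) (b : Bool) :
    cnt (Fin.snoc ε b) = cnt ε + if b = true then 1 else 0 := by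
  unfold cnt
  rw [Finset.card_filter, Finset.card_filter, Fin.sum_univ_castSucc]
  simp [Fin.snoc_castSucc, Fin.snoc_last]

/-- nonnegativity of all partial sums -/
def NN {m : ℕ} (ε : Fin m → Bool) : Prop := ∀ j ∈ Finset.range (m+1), 0 ≤ psum ε j

instance {m : ℕ} (ε : Fin m → Bool) : Decidable (NN ε) := by unfold NN; infer_instance

/-- the number of nonnegative paths with `u` up-steps -/
def A (m u : ℕ) : ℕ :=
  (univ.filter (fun ε : Fin m → Bool =>
    NN ε ∧ cnt ε = u)).card

lemma choose_anti {m u : ℕ} (h : m ≤ 2 * u) : Nat.choose m (u+1) ≤ Nat.choose m u := by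
  rcases le_or_gt m u with hu | hu
  · rw [Nat.choose_eq_zero_of_lt (by omega)]
    exact Nat.zero_le _
  · have h1 : Nat.choose m u = Nat.choose m (m - u) := (Nat.choose_symm hu.le).symm
    have h2 : Nat.choose m (u+1) = Nat.choose m (m - (u+1)) := (Nat.choose_symm hu).symm
    rw [h1, h2]
    have : m - (u+1) < m / 2 := by omega
    have := Nat.choose_le_succ_of_lt_half_left (n := m) this
    have he : m - (u + 1) + 1 = m - u := by omega
    rwa [he] at this

lemma stp_true : stp true = 1 := rfl
lemma stp_false : stp false = -1 := rfl

lemma A_succ (m u : ℕ) :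
    A (m+1) u =
      (univ.filter (fun ε : Fin m → Bool =>
        (NN ε ∧ 0 ≤ tot ε + 1) ∧ cnt ε + 1 = u)).card
    + (univ.filter (fun ε : Fin m → Bool =>
        (NN ε ∧ 0 ≤ tot ε - 1) ∧ cnt ε = u)).card := by
  classical
  have key : ∀ (b : Bool) (ε : Fin m → Bool),
      (NN (Fin.snoc ε b) ∧ cnt (Fin.snoc ε b) = u) ↔
      ((NN ε ∧ 0 ≤ tot ε + stp b) ∧
        cnt ε + (if b = true then 1 else 0) = u) := by
    intro b ε
    rw [cnt_snoc]
    constructor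
    · rintro ⟨hNN, hc⟩
      refine ⟨⟨fun j hj => ?_, ?_⟩, hc⟩
      · have := hNN j (by simp at hj ⊢; omega)
        rwa [psum_snoc, if_neg (by simp at hj; omega), add_zero] at this
      · have := hNN (m+1) (by simp)
        rwa [psum_snoc, if_pos (by omega), psum_eq_tot ε (by omega)] at this
    · rintro ⟨⟨hNN, ht⟩, hc⟩
      refine ⟨fun j hj => ?_, hc⟩
      rw [psum_snoc]
      rcases lt_or_ge m j with hj' | hj'
      · rw [if_pos hj', psum_eq_tot ε (by omega)]; exact ht
      · rw [if_neg (by omega), add_zero]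
        exact hNN j (by simp; omega)
  rw [A, Finset.card_filter]
  rw [← Fintype.sum_equiv (Fin.snocEquiv (fun _ => Bool))
      (fun x => if (NN (Fin.snocEquiv (fun _ => Bool) x) ∧ cnt (Fin.snocEquiv (fun _ => Bool) x) = u) then 1 else 0)
      _ (fun x => rfl)]
  rw [Fintype.sum_prod_type, Fintype.sum_bool]
  have e1 : ∀ (b : Bool) (ε : Fin m → Bool),
      (Fin.snocEquiv (fun _ => Bool) (b, ε)) = Fin.snoc ε b := fun b ε => rfl
  simp only [e1, key]
  rw [Finset.card_filter, Finset.card_filter]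
  have hs1 : stp true = 1 := rfl
  have hs2 : stp false = -1 := rfl
  simp only [hs1, hs2]
  norm_num

lemma A_eq : ∀ m u, m ≤ 2*u+1 → A m u = Nat.choose m u - Nat.choose m (u+1) := by
  intro m
  induction m with
  | zero =>
    intro u _
    cases u with
    | zero =>
      rw [A]
      have : (univ.filter (fun ε : Fin 0 → Bool =>
          NN ε ∧ cnt ε = 0)) = univ := by
        refine Finset.filter_true_of_mem fun ε _ => ⟨fun j hj => ?_, by simp [cnt]⟩
        simp [psum]
      rw [this]
      simp
    | succ v =>
      rw [A]
      have : (univ.filter (fun ε : Fin 0 → Bool =>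
          NN ε ∧ cnt ε = v+1)) = ∅ := by
        refine Finset.filter_false_of_mem fun ε _ => ?_
        rintro ⟨-, hc⟩
        have : cnt ε = 0 := by simp [cnt]
        omega
      rw [this]
      simp [Nat.choose_eq_zero_of_lt]
  | succ m ih =>
    intro u hu
    rw [A_succ]
    rcases eq_or_lt_of_le (show m ≤ 2*u by omega) with hcase | hcase
    · -- m = 2u : both empty, RHS zero
      have h1 : (univ.filter (fun ε : Fin m → Bool =>
          (NN ε ∧ 0 ≤ tot ε + 1) ∧ cnt ε + 1 = u)) = ∅ := by
        refine Finset.filter_false_of_mem fun ε _ => ?_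
        rintro ⟨⟨hNN, -⟩, hc⟩
        have h0 := hNN m (by simp)
        rw [psum_eq_tot ε le_rfl, tot_eq] at h0
        omega
      have h2 : (univ.filter (fun ε : Fin m → Bool =>
          (NN ε ∧ 0 ≤ tot ε - 1) ∧ cnt ε = u)) = ∅ := by
        refine Finset.filter_false_of_mem fun ε _ => ?_
        rintro ⟨⟨-, ht⟩, hc⟩
        rw [tot_eq] at ht
        omega
      rw [h1, h2]
      have hsymm : Nat.choose (m+1) u = Nat.choose (m+1) (u+1) := by
        have := Nat.choose_symm (n := m+1) (k := u+1) (by omega)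
        rw [show m+1-(u+1) = u by omega] at this
        omega
      simp [hsymm]
    · -- m + 1 ≤ 2u
      obtain ⟨v, rfl⟩ : ∃ v, u = v + 1 := ⟨u - 1, by omega⟩
      have h1 : (univ.filter (fun ε : Fin m → Bool =>
          (NN ε ∧ 0 ≤ tot ε + 1) ∧ cnt ε + 1 = v+1))
          = (univ.filter (fun ε : Fin m → Bool =>
          NN ε ∧ cnt ε = v)) := by
        ext ε
        simp only [Finset.mem_filter, Finset.mem_univ, true_and]
        constructor
        · rintro ⟨⟨hNN, -⟩, hc⟩; exact ⟨hNN, by omega⟩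
        · rintro ⟨hNN, hc⟩
          refine ⟨⟨hNN, ?_⟩, by omega⟩
          rw [tot_eq]; omega
      have h2 : (univ.filter (fun ε : Fin m → Bool =>
          (NN ε ∧ 0 ≤ tot ε - 1) ∧ cnt ε = v+1))
          = (univ.filter (fun ε : Fin m → Bool =>
          NN ε ∧ cnt ε = v+1)) := by
        ext ε
        simp only [Finset.mem_filter, Finset.mem_univ, true_and]
        constructor
        · rintro ⟨⟨hNN, -⟩, hc⟩; exact ⟨hNN, hc⟩
        · rintro ⟨hNN, hc⟩
          refine ⟨⟨hNN, ?_⟩, hc⟩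
          rw [tot_eq]; omega
      rw [h1, h2, ← A, ← A, ih v (by omega), ih (v+1) (by omega)]
      have p1 : Nat.choose (m+1) (v+1) = Nat.choose m v + Nat.choose m (v+1) :=
        Nat.choose_succ_succ m v
      have p2 : Nat.choose (m+1) (v+1+1) = Nat.choose m (v+1) + Nat.choose m (v+1+1) :=
        Nat.choose_succ_succ m (v+1)
      have mono2 : Nat.choose m (v+1+1) ≤ Nat.choose m (v+1) := choose_anti (by omega)
      have mono1 : Nat.choose m (v+1) ≤ Nat.choose m v := by
        rcases eq_or_lt_of_le (show m ≤ 2*v+1 by omega) with hc | hc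
        · have := Nat.choose_symm (n := m) (k := v+1) (by omega)
          rw [show m-(v+1) = v by omega] at this
          omega
        · exact choose_anti (by omega)
      omega

lemma A_zero {m u : ℕ} (h : 2*u < m) : A m u = 0 := by
  rw [A, Finset.card_eq_zero]
  refine Finset.filter_false_of_mem fun ε _ => ?_
  rintro ⟨hNN, hc⟩
  have h0 := hNN m (by simp)
  rw [psum_eq_tot ε le_rfl, tot_eq] at h0
  omega

lemma tele (g : ℕ → ℕ) (anti : ∀ i, g (i+1) ≤ g i) :
    ∀ k, ∑ i ∈ Finset.range k, (g i - g (i+1)) = g 0 - g k := by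
  have hle : ∀ k, g k ≤ g 0 := by
    intro k
    induction k with
    | zero => exact le_rfl
    | succ k ih => exact le_trans (anti k) ih
  intro k
  induction k with
  | zero => simp
  | succ k ih =>
    rw [Finset.sum_range_succ, ih]
    have := anti k
    have := hle k
    omega

lemma A_total (n : ℕ) :
    (univ.filter (fun ε : Fin (2*n) → Bool => NN ε)).card = Nat.choose (2*n) n := by
  have hfib : ∀ ε ∈ (univ.filter (fun ε : Fin (2*n) → Bool => NN ε)), cnt ε ∈ Finset.range (2*n+1) := by
    intro ε _
    have : cnt ε ≤ 2*n := le_trans (Finset.card_filter_le _ _) (by simp)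
    simp [Finset.mem_range]; omega
  rw [Finset.card_eq_sum_card_fiberwise hfib]
  have hA : ∀ u, ((univ.filter (fun ε : Fin (2*n) → Bool => NN ε)).filter
      (fun ε => cnt ε = u)).card = A (2*n) u := by
    intro u
    rw [Finset.filter_filter, A]
  simp only [hA]
  have hsplit : Finset.range (2*n+1) = Finset.Ico 0 n ∪ Finset.Ico n (2*n+1) := by
    rw [Finset.range_eq_Ico,
      ← Finset.Ico_union_Ico_eq_Ico (Nat.zero_le n) (show n ≤ 2*n+1 by omega)]
  rw [hsplit, Finset.sum_union (by
    simp [Finset.disjoint_left, Finset.mem_Ico]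
    omega)]
  have hz : ∑ u ∈ Finset.Ico 0 n, A (2*n) u = 0 := by
    refine Finset.sum_eq_zero fun u hu => ?_
    simp only [Finset.mem_Ico] at hu
    exact A_zero (by omega)
  rw [hz, zero_add, Finset.sum_Ico_eq_sum_range]
  have heq : ∀ i ∈ Finset.range (2*n+1-n), A (2*n) (n+i)
      = Nat.choose (2*n) (n+i) - Nat.choose (2*n) (n+i+1) := by
    intro i _
    exact A_eq (2*n) (n+i) (by omega)
  rw [Finset.sum_congr rfl heq, show 2*n+1-n = n+1 by omega]
  have := tele (fun i => Nat.choose (2*n) (n+i)) (fun i => by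
    simpa [show n+(i+1) = n+i+1 from by omega] using
      choose_anti (m := 2*n) (u := n+i) (by omega)) (n+1)
  simp only [show ∀ i, n + (i+1) = n+i+1 from fun i => by omega] at this
  rw [this, Nat.add_zero, Nat.choose_eq_zero_of_lt (show 2*n < n+n+1 by omega), Nat.sub_zero]

lemma cnt_count (m u : ℕ) :
    (univ.filter (fun ε : Fin m → Bool => cnt ε = u)).card = Nat.choose m u := by
  have : Nat.choose m u = (Finset.powersetCard u (univ : Finset (Fin m))).card := by
    rw [Finset.card_powersetCard, Finset.card_univ, Fintype.card_fin]
  rw [this]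
  refine Finset.card_bij (fun ε _ => univ.filter (fun i => ε i = true)) ?_ ?_ ?_
  · intro ε hε
    simp only [Finset.mem_filter, Finset.mem_univ, true_and] at hε
    rw [Finset.mem_powersetCard]
    exact ⟨Finset.subset_univ _, hε⟩
  · intro ε₁ h₁ ε₂ h₂ h
    funext i
    have := Finset.ext_iff.mp h i
    simp only [Finset.mem_filter, Finset.mem_univ, true_and] at this
    cases hb₁ : ε₁ i <;> cases hb₂ : ε₂ i <;> simp_all
  · intro s hs
    rw [Finset.mem_powersetCard] at hs
    refine ⟨fun i => decide (i ∈ s), ?_, ?_⟩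
    · rw [Finset.mem_filter]
      refine ⟨Finset.mem_univ _, ?_⟩
      show (univ.filter (fun i => decide (i ∈ s) = true)).card = u
      have : (univ.filter (fun i => decide (i ∈ s) = true)) = s := by
        ext i; simp
      rw [this, hs.2]
    · ext i; simp

lemma tot_zero_count (n : ℕ) :
    (univ.filter (fun ε : Fin (2*n) → Bool => tot ε = 0)).card = Nat.choose (2*n) n := by
  have : (univ.filter (fun ε : Fin (2*n) → Bool => tot ε = 0))
      = (univ.filter (fun ε : Fin (2*n) → Bool => cnt ε = n)) := by
    ext ε
    simp only [Finset.mem_filter, Finset.mem_univ, true_and]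
    rw [tot_eq]
    constructor
    · intro h
      have : (cnt ε : ℤ) = n := by push_cast at h ⊢; omega
      exact_mod_cast this
    · intro h
      rw [h]; push_cast; ring
  rw [this, cnt_count]


lemma stp_mem (b : Bool) : stp b = 1 ∨ stp b = -1 := by cases b <;> simp [stp]

lemma stp_inj : Function.Injective stp := by
  intro a b h
  cases a <;> cases b <;> simp_all [stp]

lemma prob_eq {Ω : Type*} [MeasurableSpace Ω] (P : Measure Ω) [IsProbabilityMeasure P]
    (X : ℕ → Ω → ℤ) (hX : ∀ i, Measurable (X i))
    (hindep : iIndepFun X P)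
    (h1 : ∀ i, P {ω | X i ω = 1} = 1/2)
    (h2 : ∀ i, P {ω | X i ω = -1} = 1/2)
    (m : ℕ) (R : (Fin m → ℤ) → Prop)
    (Qs : Finset (Fin m → Bool)) (hQs : ∀ ε, (ε ∈ Qs ↔ R (fun i => stp (ε i)))) :
    P {ω | R (fun i => X i ω)} = Qs.card * (2⁻¹ : ℝ≥0∞) ^ m := by
  classical
  set val : (Fin m → Bool) → ℕ → ℤ :=
    fun ε i => if h : i < m then stp (ε ⟨i, h⟩) else 0 with hval
  set cyl : (Fin m → Bool) → Set Ω :=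
    fun ε => ⋂ i ∈ Finset.range m, X i ⁻¹' {val ε i} with hcyl_def
  -- single coordinate probabilities
  have hsingle : ∀ (i : ℕ) (z : ℤ), z = 1 ∨ z = -1 → P (X i ⁻¹' {z}) = 2⁻¹ := by
    intro i z hz
    have hset : X i ⁻¹' {z} = {ω | X i ω = z} := by ext ω; simp
    rcases hz with rfl | rfl
    · rw [hset, h1 i, one_div]
    · rw [hset, h2 i, one_div]
  -- cylinder probability
  have hcyl : ∀ ε, P (cyl ε) = 2⁻¹ ^ m := by
    intro ε
    rw [hcyl_def]
    have hs : ∀ i ∈ Finset.range m,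
        MeasurableSet[(inferInstance : MeasurableSpace ℤ).comap (X i)] (X i ⁻¹' {val ε i}) :=
      fun i _ => ⟨{val ε i}, measurableSet_singleton _, rfl⟩
    rw [hindep.meas_biInter hs]
    have : ∀ i ∈ Finset.range m, P (X i ⁻¹' {val ε i}) = 2⁻¹ := by
      intro i hi
      rw [Finset.mem_range] at hi
      refine hsingle i _ ?_
      simp only [hval, dif_pos hi]
      exact stp_mem _
    rw [Finset.prod_congr rfl this, Finset.prod_const, Finset.card_range]
  -- the good set
  set G : Set Ω := ⋂ i ∈ Finset.range m, {ω | X i ω = 1 ∨ X i ω = -1} with hG_def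
  have hAmeas : ∀ i : ℕ, MeasurableSet {ω | X i ω = 1 ∨ X i ω = -1} := by
    intro i
    have : {ω | X i ω = 1 ∨ X i ω = -1} = X i ⁻¹' {1} ∪ X i ⁻¹' {-1} := by ext ω; simp
    rw [this]
    exact ((hX i) (measurableSet_singleton _)).union ((hX i) (measurableSet_singleton _))
  have hGmeas : MeasurableSet G :=
    MeasurableSet.biInter (Finset.range m).countable_toSet (fun i _ => hAmeas i)
  have hGc : P Gᶜ = 0 := by
    have hone : ∀ i : ℕ, P {ω | X i ω = 1 ∨ X i ω = -1} = 1 := by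
      intro i
      have hsplit : {ω | X i ω = 1 ∨ X i ω = -1} = X i ⁻¹' {1} ∪ X i ⁻¹' {-1} := by ext ω; simp
      have hdisj : Disjoint (X i ⁻¹' {1}) (X i ⁻¹' {-1}) := by
        rw [Set.disjoint_left]
        intro ω hω1 hω2
        simp only [Set.mem_preimage, Set.mem_singleton_iff] at hω1 hω2
        omega
      rw [hsplit, measure_union hdisj ((hX i) (measurableSet_singleton _)),
        hsingle i 1 (Or.inl rfl), hsingle i (-1) (Or.inr rfl)]
      rw [ENNReal.inv_two_add_inv_two]
    have : Gᶜ = ⋃ i ∈ Finset.range m, {ω | X i ω = 1 ∨ X i ω = -1}ᶜ := by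
      rw [hG_def, Set.compl_iInter₂]
    rw [this]
    refine (measure_biUnion_null_iff (Finset.range m).countable_toSet).mpr fun i _ => ?_
    rw [measure_compl (hAmeas i) (measure_ne_top _ _), hone i, measure_univ, tsub_self]
  -- decomposition
  have hdecomp : {ω | R (fun i => X i ω)} ∩ G = ⋃ ε ∈ Qs, (cyl ε ∩ G) := by
    ext ω
    simp only [Set.mem_inter_iff, Set.mem_setOf_eq, Set.mem_iUnion, exists_prop]
    constructor
    · rintro ⟨hR, hG⟩
      have hGω : ∀ i, i ∈ Finset.range m → X i ω = 1 ∨ X i ω = -1 := by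
        intro i hi
        have := Set.mem_iInter₂.mp hG i hi
        exact this
      set ε : Fin m → Bool := fun i => decide (X (i : ℕ) ω = 1) with hε
      have hkey : ∀ i : Fin m, X (i : ℕ) ω = stp (ε i) := by
        intro i
        rcases hGω i (Finset.mem_range.mpr i.isLt) with h | h
        · simp [hε, h, stp]
        · have hne : ¬ (X (i : ℕ) ω = 1) := by omega
          simp [hε, h, hne, stp]
      have hfun : (fun i : Fin m => X (i : ℕ) ω) = fun i => stp (ε i) := funext hkey
      refine ⟨ε, ?_, ?_, hG⟩
      · rw [hQs, ← hfun]; exact hR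
      · rw [hcyl_def]
        refine Set.mem_iInter₂.mpr fun i hi => ?_
        rw [Finset.mem_range] at hi
        simp only [Set.mem_preimage, Set.mem_singleton_iff, hval, dif_pos hi]
        exact hkey ⟨i, hi⟩
    · rintro ⟨ε, hεQ, hcylω, hG⟩
      refine ⟨?_, hG⟩
      have hfun : (fun i : Fin m => X (i : ℕ) ω) = fun i => stp (ε i) := by
        funext i
        have := Set.mem_iInter₂.mp hcylω (i : ℕ) (Finset.mem_range.mpr i.isLt)
        simp only [Set.mem_preimage, Set.mem_singleton_iff, hval, dif_pos i.isLt] at this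
        rw [this]
      rw [hfun]
      exact (hQs ε).mp hεQ
  have hcylmeas : ∀ ε : Fin m → Bool, MeasurableSet (cyl ε) := by
    intro ε
    rw [hcyl_def]
    exact MeasurableSet.biInter (Finset.range m).countable_toSet
      (fun i _ => (hX i) (measurableSet_singleton _))
  have hdisj : Set.PairwiseDisjoint (↑Qs) (fun ε => cyl ε ∩ G) := by
    intro ε₁ _ ε₂ _ hne
    rw [Function.onFun, Set.disjoint_left]
    intro ω hω1 hω2
    refine hne ?_
    funext i
    have k1 := Set.mem_iInter₂.mp hω1.1 (i : ℕ) (Finset.mem_range.mpr i.isLt)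
    have k2 := Set.mem_iInter₂.mp hω2.1 (i : ℕ) (Finset.mem_range.mpr i.isLt)
    simp only [Set.mem_preimage, Set.mem_singleton_iff, hval, dif_pos i.isLt] at k1 k2
    exact stp_inj (by rw [← k1, ← k2])
  calc P {ω | R (fun i => X i ω)} = P ({ω | R (fun i => X i ω)} ∩ G) :=
        (measure_inter_conull hGc).symm
    _ = P (⋃ ε ∈ Qs, (cyl ε ∩ G)) := by rw [hdecomp]
    _ = ∑ ε ∈ Qs, P (cyl ε ∩ G) :=
        measure_biUnion_finset hdisj (fun ε _ => (hcylmeas ε).inter hGmeas)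
    _ = ∑ ε ∈ Qs, P (cyl ε) := Finset.sum_congr rfl fun ε _ => measure_inter_conull hGc
    _ = ∑ ε ∈ Qs, 2⁻¹ ^ m := Finset.sum_congr rfl fun ε _ => hcyl ε
    _ = Qs.card * (2⁻¹ : ℝ≥0∞) ^ m := by rw [Finset.sum_const, nsmul_eq_mul]

lemma sum_fin_eq (m : ℕ) (f : ℕ → ℤ) (j : ℕ) (hj : j ≤ m) :
    ∑ i ∈ Finset.range j, f i = ∑ i : Fin m, if (i : ℕ) < j then f i else 0 := by
  rw [Fin.sum_univ_eq_sum_range (fun i => if i < j then f i else 0) m]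
  rw [← Finset.sum_filter]
  congr 1
  ext i
  simp only [Finset.mem_filter, Finset.mem_range]
  omega

end SSRW

theorem stmt2 {Ω : Type*} [MeasurableSpace Ω] (P : Measure Ω) [IsProbabilityMeasure P]
    (X : ℕ → Ω → ℤ) (hX : ∀ i, Measurable (X i))
    (hindep : iIndepFun X P)
    (h1 : ∀ i, P {ω | X i ω = 1} = 1/2)
    (h2 : ∀ i, P {ω | X i ω = -1} = 1/2)
    (S : ℕ → Ω → ℤ) (hS : ∀ n ω, S n ω = ∑ i ∈ Finset.range n, X i ω)
    (n : ℕ) (hn : 1 ≤ n) :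
    P {ω | ∀ j, 1 ≤ j → j ≤ 2 * n → 0 ≤ S j ω} = P {ω | S (2 * n) ω = 0} := by
  classical
  set m := 2 * n with hm
  -- first event
  set R1 : (Fin m → ℤ) → Prop :=
    fun v => ∀ j ∈ Finset.range (m+1), 0 ≤ ∑ i : Fin m, if (i : ℕ) < j then v i else 0 with hR1
  have hE1 : {ω | ∀ j, 1 ≤ j → j ≤ 2 * n → 0 ≤ S j ω} = {ω | R1 (fun i => X i ω)} := by
    ext ω
    simp only [Set.mem_setOf_eq, hR1, Finset.mem_range]
    constructor
    · intro h j hj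
      rcases Nat.eq_zero_or_pos j with rfl | hj0
      · simp
      · have := h j hj0 (by omega)
        rw [hS, SSRW.sum_fin_eq m (fun i => X i ω) j (by omega)] at this
        exact this
    · intro h j hj0 hjm
      rw [hS, SSRW.sum_fin_eq m (fun i => X i ω) j (by omega)]
      exact h j (by omega)
  set R2 : (Fin m → ℤ) → Prop := fun v => (∑ i : Fin m, v i) = 0 with hR2
  have hE2 : {ω | S (2 * n) ω = 0} = {ω | R2 (fun i => X i ω)} := by
    ext ω
    simp only [Set.mem_setOf_eq, hR2]
    rw [hS, ← Fin.sum_univ_eq_sum_range (fun i => X i ω) m]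
  have hQs1 : ∀ ε : Fin m → Bool,
      ε ∈ (Finset.univ.filter (fun ε : Fin m → Bool => SSRW.NN ε)) ↔
        R1 (fun i => SSRW.stp (ε i)) := by
    intro ε
    rw [Finset.mem_filter]
    simp only [Finset.mem_univ, true_and, hR1]
    exact Iff.rfl
  have hQs2 : ∀ ε : Fin m → Bool,
      ε ∈ (Finset.univ.filter (fun ε : Fin m → Bool => SSRW.tot ε = 0)) ↔
        R2 (fun i => SSRW.stp (ε i)) := by
    intro ε
    rw [Finset.mem_filter]
    simp only [Finset.mem_univ, true_and, hR2]
    exact Iff.rfl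
  rw [hE1, hE2,
    SSRW.prob_eq P X hX hindep h1 h2 m R1 _ hQs1,
    SSRW.prob_eq P X hX hindep h1 h2 m R2 _ hQs2,
    SSRW.A_total n, SSRW.tot_zero_count n]
end

section
/- For a simple symmetric random walk started at 0 and even n ≥ 2, the probability that S_j ≥ 0 for all 0 ≤ j ≤ n and S_n = 0 equals C(n, n/2)/2^n − C(n, (n+2)/2)/2^n, which equals 2·(n−1)!!/(n+2)!!. -/
open MeasureTheory ProbabilityTheory Filter

namespace SSRW3
open List DyckStep Nat


open List DyckStep

def stepVal : DyckStep → ℤ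
  | U => 1
  | D => -1

lemma sum_map_stepVal (w : List DyckStep) :
    (w.map stepVal).sum = (w.count U : ℤ) - (w.count D : ℤ) := by
  induction w with
  | nil => simp
  | cons s t ih =>
    cases s <;> simp [stepVal, ih, List.count_cons] <;> ring

lemma count_eq_of_sum {w : List DyckStep} (h : (w.map stepVal).sum = 0) :
    w.count U = w.count D := by
  have := sum_map_stepVal w; omega

lemma count_le_of_sum {w : List DyckStep} (h : 0 ≤ (w.map stepVal).sum) :
    w.count D ≤ w.count U := by
  have := sum_map_stepVal w; omega

def goodB {n : ℕ} (b : Fin n → Bool) : Prop :=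
  (∀ j, 0 ≤ ((List.ofFn fun i => if b i then (1:ℤ) else -1).take j).sum) ∧
    (List.ofFn fun i => if b i then (1:ℤ) else -1).sum = 0

lemma map_stepVal_wlist {n : ℕ} (b : Fin n → Bool) :
    (List.ofFn fun i => if b i then U else D).map stepVal
      = List.ofFn fun i => if b i then (1:ℤ) else -1 := by
  rw [List.map_ofFn]
  congr 1
  funext i
  cases hb : b i <;> simp [hb, stepVal]

/-- goodness of the ±1 list of a Dyck word -/
lemma goodB_of_map (w : List DyckStep)
    (hUD : w.count U = w.count D)
    (hpre : ∀ i, (w.take i).count D ≤ (w.take i).count U) :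
    (∀ j, 0 ≤ ((w.map stepVal).take j).sum) ∧ (w.map stepVal).sum = 0 := by
  constructor
  · intro j
    rw [← List.map_take]
    rw [sum_map_stepVal]
    have := hpre j
    omega
  · rw [sum_map_stepVal, hUD]; ring

def toDW {m : ℕ} (b : {b : Fin (2 * m) → Bool // goodB b}) :
    {p : DyckWord // p.semilength = m} := by
  refine ⟨⟨List.ofFn fun i => if b.1 i then U else D, ?_, ?_⟩, ?_⟩
  · apply count_eq_of_sum
    rw [map_stepVal_wlist]
    exact b.2.2
  · intro i
    apply count_le_of_sum
    rw [List.map_take, map_stepVal_wlist]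
    exact b.2.1 i
  · have h2 := DyckWord.two_mul_semilength_eq_length
      (p := ⟨List.ofFn fun i => if b.1 i then U else D, by
        apply count_eq_of_sum; rw [map_stepVal_wlist]; exact b.2.2, by
        intro i; apply count_le_of_sum; rw [List.map_take, map_stepVal_wlist]; exact b.2.1 i⟩)
    simp only [List.length_ofFn] at h2
    omega

lemma toDW_bijective (m : ℕ) : Function.Bijective (toDW (m := m)) := by
  constructor
  · rintro ⟨b, hb⟩ ⟨c, hc⟩ h
    simp only [toDW, Subtype.mk.injEq, DyckWord.mk.injEq] at h
    have h2 := List.ofFn_injective h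
    ext i
    have := congrFun h2 i
    cases hbi : b i <;> cases hci : c i <;> simp [hbi, hci] at this ⊢
  · rintro ⟨p, hp⟩
    have hlen : p.toList.length = 2 * m := by
      rw [← p.two_mul_semilength_eq_length, hp]
    set b : Fin (2 * m) → Bool := fun i => decide (p.toList.get ⟨i.val, by omega⟩ = U) with hbdef
    have hw : (List.ofFn fun i => if b i then U else D) = p.toList := by
      apply List.ext_get (by simp [hlen])
      intro i h1' h2'
      rw [List.get_ofFn]
      have : i < 2 * m := by simpa using h1'
      rcases (p.toList.get ⟨i, h2'⟩).dichotomy with hg | hg <;>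
        simp only [List.get_eq_getElem] at hg <;>
        simp [hbdef, Fin.cast, List.get_eq_getElem, hg]
    have hgood : goodB b := by
      have := goodB_of_map p.toList p.count_U_eq_count_D p.count_D_le_count_U
      unfold goodB
      rw [← map_stepVal_wlist b, hw]
      exact this
    refine ⟨⟨b, hgood⟩, ?_⟩
    apply Subtype.ext
    apply DyckWord.ext
    exact hw

lemma card_goodB (m : ℕ) :
    Nat.card {b : Fin (2 * m) → Bool // goodB b} = catalan m := by
  rw [← DyckWord.card_dyckWord_semilength_eq_catalan m, ← Nat.card_eq_fintype_card]
  exact Nat.card_eq_of_bijective _ (toDW_bijective m)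


open List DyckStep

def zext (n : ℕ) (b : Fin n → Bool) (i : ℕ) : ℤ :=
  if h : i < n then (if b ⟨i, h⟩ then 1 else -1) else 0

lemma sum_take_zlist (n : ℕ) (b : Fin n → Bool) (j : ℕ) (hj : j ≤ n) :
    ((List.ofFn fun i => if b i then (1:ℤ) else -1).take j).sum
      = ∑ k ∈ Finset.range j, zext n b k := by
  rw [List.sum_take_ofFn, Finset.sum_filter]
  have h1 : ∀ i : Fin n, (if i.val < j then (if b i then (1:ℤ) else -1) else 0)
      = (fun k => if k < j then zext n b k else 0) i.val := by
    intro i; simp [zext, i.isLt]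
  rw [Finset.sum_congr rfl (fun i _ => h1 i),
    Fin.sum_univ_eq_sum_range (fun k => if k < j then zext n b k else 0) n,
    ← Finset.sum_filter]
  congr 1
  ext k
  simp only [Finset.mem_filter, Finset.mem_range]
  omega

lemma sum_zlist (n : ℕ) (b : Fin n → Bool) :
    (List.ofFn fun i => if b i then (1:ℤ) else -1).sum
      = ∑ k ∈ Finset.range n, zext n b k := by
  rw [← sum_take_zlist n b n le_rfl, List.take_of_length_le (by simp)]


open Nat

lemma key_nat (m : ℕ) : catalan m + (2*m).choose (m+1) = (2*m).choose m := by
  have h1 := succ_mul_catalan_eq_centralBinom m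
  rw [Nat.centralBinom_eq_two_mul_choose] at h1
  have h2 := Nat.choose_succ_right_eq (2*m) m
  rw [show 2*m - m = m by omega] at h2
  apply Nat.eq_of_mul_eq_mul_left (show 0 < m+1 by omega)
  calc (m+1) * (catalan m + (2*m).choose (m+1))
      = (m+1) * catalan m + (2*m).choose (m+1) * (m+1) := by ring
    _ = (2*m).choose m + (2*m).choose m * m := by rw [h1, h2]
    _ = (m+1) * ((2*m).choose m) := by ring

lemma real_eq_one (m : ℕ) :
    (catalan m : ℝ) * (1/2)^(2*m)
      = ((2*m).choose m : ℝ) / 2^(2*m) - ((2*m).choose (m+1) : ℝ) / 2^(2*m) := by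
  have keyR : (catalan m : ℝ) = (2*m).choose m - (2*m).choose (m+1) := by
    have := congrArg (fun x : ℕ => (x : ℝ)) (key_nat m)
    push_cast at this
    linarith
  rw [keyR, one_div, inv_pow]
  ring

lemma real_eq_two (m : ℕ) (hm : 1 ≤ m) :
    (catalan m : ℝ) * (1/2)^(2*m)
      = 2 * ((2*m - 1)‼ : ℝ) / ((2*m + 2)‼ : ℝ) := by
  have f1 : catalan m * ((m+1).factorial * m.factorial) = (2*m).factorial := by
    have h1 := succ_mul_catalan_eq_centralBinom m
    rw [Nat.centralBinom_eq_two_mul_choose] at h1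
    have h2 := Nat.choose_mul_factorial_mul_factorial (show m ≤ 2*m by omega)
    rw [show 2*m - m = m by omega] at h2
    calc catalan m * ((m+1).factorial * m.factorial)
        = ((m+1) * catalan m) * m.factorial * m.factorial := by
          rw [Nat.factorial_succ]; ring
      _ = (2*m).choose m * m.factorial * m.factorial := by rw [h1]
      _ = (2*m).factorial := h2
  have f2 : (2*m - 1)‼ * (2^m * m.factorial) = (2*m).factorial := by
    have h3 := Nat.factorial_eq_mul_doubleFactorial (2*m - 1)
    rw [show 2*m - 1 + 1 = 2*m by omega, Nat.doubleFactorial_two_mul] at h3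
    rw [h3]; ring
  have f3 : (2*m + 2)‼ = 2^(m+1) * (m+1).factorial := by
    rw [show 2*m+2 = 2*(m+1) by ring, Nat.doubleFactorial_two_mul]
  have F1 : (catalan m : ℝ) * ((m+1).factorial * m.factorial) = (2*m).factorial := by
    exact_mod_cast f1
  have F2 : ((2*m-1)‼ : ℝ) * (2^m * m.factorial) = (2*m).factorial := by exact_mod_cast f2
  have F3 : ((2*m+2)‼ : ℝ) = 2^(m+1) * (m+1).factorial := by exact_mod_cast f3
  have hfm1 : ((m+1).factorial : ℝ) ≠ 0 := by positivity
  have hfm : ((m).factorial : ℝ) ≠ 0 := by positivity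
  have e1 : (catalan m : ℝ) = (2*m).factorial / ((m+1).factorial * m.factorial) := by
    rw [eq_div_iff (by positivity)]; exact F1
  have e2 : ((2*m-1)‼ : ℝ) = (2*m).factorial / (2^m * m.factorial) := by
    rw [eq_div_iff (by positivity)]; exact F2
  rw [e1, e2, F3, one_div, inv_pow]
  field_simp
  ring


end SSRW3



theorem stmt3 {Ω : Type*} [MeasurableSpace Ω] (P : Measure Ω) [IsProbabilityMeasure P]
    (X : ℕ → Ω → ℤ) (hX : ∀ i, Measurable (X i))
    (hindep : iIndepFun X P)
    (h1 : ∀ i, P {ω | X i ω = 1} = 1/2)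
    (h2 : ∀ i, P {ω | X i ω = -1} = 1/2)
    (S : ℕ → Ω → ℤ) (hS : ∀ n ω, S n ω = ∑ i ∈ Finset.range n, X i ω)
    (n : ℕ) (hn : 2 ≤ n) (hev : Even n) :
    (P {ω | (∀ j ≤ n, 0 ≤ S j ω) ∧ S n ω = 0}).toReal
      = (n.choose (n / 2) : ℝ) / 2 ^ n - (n.choose ((n + 2) / 2) : ℝ) / 2 ^ n ∧
    (P {ω | (∀ j ≤ n, 0 ≤ S j ω) ∧ S n ω = 0}).toReal
      = 2 * (Nat.doubleFactorial (n - 1) : ℝ) / (Nat.doubleFactorial (n + 2) : ℝ) := by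
  classical
  obtain ⟨m, hm⟩ := hev
  have hm2 : n = 2 * m := by omega
  subst hm2
  have hm1 : 1 ≤ m := by omega
  set E := {ω | (∀ j ≤ 2*m, 0 ≤ S j ω) ∧ S (2*m) ω = 0} with hE
  set G : Finset (Fin (2*m) → Bool) := Finset.univ.filter (fun b => SSRW3.goodB b) with hG
  have hGcard : G.card = catalan m := by
    rw [← SSRW3.card_goodB m, Nat.card_eq_fintype_card, Fintype.card_subtype]
  set A : (Fin (2*m) → Bool) → Set Ω :=
    fun b => ⋂ i ∈ Finset.range (2*m), X i ⁻¹' {SSRW3.zext (2*m) b i} with hA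
  have hAmeas : ∀ b, MeasurableSet (A b) := fun b =>
    MeasurableSet.biInter (Finset.range (2*m) : Finset ℕ).countable_toSet
      (fun i _ => (hX i) (measurableSet_singleton _))
  have hmemA : ∀ b ω, ω ∈ A b ↔ ∀ i < 2*m, X i ω = SSRW3.zext (2*m) b i := by
    intro b ω; simp [hA]
  have hAP : ∀ b, P (A b) = (1/2 : ENNReal) ^ (2*m) := by
    intro b
    rw [hA]
    rw [hindep.measure_inter_preimage_eq_mul (Finset.range (2*m))
      (sets := fun i => {SSRW3.zext (2*m) b i}) (fun i _ => measurableSet_singleton _)]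
    have hfac : ∀ i ∈ Finset.range (2*m),
        P (X i ⁻¹' {SSRW3.zext (2*m) b i}) = 1/2 := by
      intro i hi
      have hi' : i < 2*m := Finset.mem_range.mp hi
      by_cases hb : b ⟨i, hi'⟩
      · have hz : SSRW3.zext (2*m) b i = 1 := by simp [SSRW3.zext, hi', hb]
        rw [hz, show X i ⁻¹' {(1:ℤ)} = {ω | X i ω = 1} from rfl, h1]
      · have hz : SSRW3.zext (2*m) b i = -1 := by simp [SSRW3.zext, hi', hb]
        rw [hz, show X i ⁻¹' {(-1:ℤ)} = {ω | X i ω = -1} from rfl, h2]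
    rw [Finset.prod_congr rfl hfac, Finset.prod_const, Finset.card_range]
  have hdisj : (G : Set (Fin (2*m) → Bool)).PairwiseDisjoint A := by
    intro b _ c _ hbc
    obtain ⟨i, hi⟩ : ∃ i, b i ≠ c i := by
      by_contra h; push_neg at h; exact hbc (funext h)
    refine Set.disjoint_left.mpr fun ω hb hc => ?_
    have hb' := (hmemA b ω).mp hb i.val i.isLt
    have hc' := (hmemA c ω).mp hc i.val i.isLt
    rw [hb'] at hc'
    simp only [SSRW3.zext, i.isLt, dif_pos, Fin.eta] at hc'
    cases hbi : b i <;> cases hci : c i <;> simp [hbi, hci] at hc' hi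
  have hsub1 : ∀ b ∈ G, A b ⊆ E := by
    intro b hb ω hω
    have hgood : SSRW3.goodB b := (Finset.mem_filter.mp hb).2
    have hXω := (hmemA b ω).mp hω
    have hkey : ∀ j ≤ 2*m, S j ω = ∑ k ∈ Finset.range j, SSRW3.zext (2*m) b k := by
      intro j hj
      rw [hS]
      exact Finset.sum_congr rfl fun i hi =>
        hXω i (lt_of_lt_of_le (Finset.mem_range.mp hi) hj)
    constructor
    · intro j hj
      rw [hkey j hj, ← SSRW3.sum_take_zlist (2*m) b j hj]
      exact hgood.1 j
    · rw [hkey (2*m) le_rfl, ← SSRW3.sum_zlist]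
      exact hgood.2
  set N : Set Ω := ⋃ i ∈ Finset.range (2*m), {ω | ¬(X i ω = 1 ∨ X i ω = -1)} with hNdef
  have hsub2 : E ⊆ (⋃ b ∈ G, A b) ∪ N := by
    intro ω hω
    by_cases hNω : ω ∈ N
    · exact Or.inr hNω
    · left
      have hval : ∀ i < 2*m, X i ω = 1 ∨ X i ω = -1 := by
        intro i hi
        by_contra hcon
        exact hNω (Set.mem_biUnion (Finset.mem_range.mpr hi) hcon)
      set b : Fin (2*m) → Bool := fun i => decide (X i.val ω = 1) with hbdef
      have hzb : ∀ i (hi : i < 2*m), SSRW3.zext (2*m) b i = X i ω := by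
        intro i hi
        rcases hval i hi with hx | hx <;> simp [SSRW3.zext, hbdef, hi, hx]
      have hkey : ∀ j ≤ 2*m, ∑ k ∈ Finset.range j, SSRW3.zext (2*m) b k = S j ω := by
        intro j hj
        rw [hS]
        exact Finset.sum_congr rfl fun i hi =>
          hzb i (lt_of_lt_of_le (Finset.mem_range.mp hi) hj)
      have hgood : SSRW3.goodB b := by
        constructor
        · intro j
          by_cases hj : j ≤ 2*m
          · rw [SSRW3.sum_take_zlist (2*m) b j hj, hkey j hj]
            exact hω.1 j hj
          · rw [List.take_of_length_le (by simp; omega), SSRW3.sum_zlist, hkey (2*m) le_rfl,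
              hω.2]
        · rw [SSRW3.sum_zlist, hkey (2*m) le_rfl, hω.2]
      refine Set.mem_biUnion (Finset.mem_filter.mpr ⟨Finset.mem_univ _, hgood⟩) ?_
      rw [hmemA]
      intro i hi
      exact (hzb i hi).symm
  have hNnull : P N = 0 := by
    rw [hNdef]
    refine (measure_biUnion_null_iff (Finset.range (2*m) : Finset ℕ).countable_toSet).mpr
      fun i _ => ?_
    have hms1 : MeasurableSet {ω | X i ω = 1} := hX i (measurableSet_singleton 1)
    have hms2 : MeasurableSet {ω | X i ω = -1} := hX i (measurableSet_singleton (-1))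
    have hd : Disjoint {ω | X i ω = 1} {ω | X i ω = -1} := by
      rw [Set.disjoint_left]
      intro ω ha hb
      simp only [Set.mem_setOf_eq] at ha hb
      omega
    have hu : P ({ω | X i ω = 1} ∪ {ω | X i ω = -1}) = 1 := by
      rw [measure_union hd hms2, h1, h2, ENNReal.add_halves]
    have hcompl : {ω | ¬(X i ω = 1 ∨ X i ω = -1)}
        = ({ω | X i ω = 1} ∪ {ω | X i ω = -1})ᶜ := by
      ext ω; simp [not_or]
    rw [hcompl, prob_compl_eq_zero_iff (hms1.union hms2)]
    exact hu
  have hPE : P E = (catalan m : ENNReal) * (1/2) ^ (2*m) := by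
    have hPU : P (⋃ b ∈ G, A b) = ∑ b ∈ G, P (A b) :=
      measure_biUnion_finset hdisj (fun b _ => hAmeas b)
    have hle1 : P E ≤ P (⋃ b ∈ G, A b) :=
      calc P E ≤ P ((⋃ b ∈ G, A b) ∪ N) := measure_mono hsub2
        _ ≤ P (⋃ b ∈ G, A b) + P N := measure_union_le _ _
        _ = P (⋃ b ∈ G, A b) := by rw [hNnull, add_zero]
    have hle2 : P (⋃ b ∈ G, A b) ≤ P E := measure_mono (Set.iUnion₂_subset hsub1)
    rw [le_antisymm hle1 hle2, hPU, Finset.sum_congr rfl (fun b _ => hAP b),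
      Finset.sum_const, hGcard, nsmul_eq_mul]
  have htoReal : (P E).toReal = (catalan m : ℝ) * (1/2)^(2*m) := by
    rw [hPE]
    rw [ENNReal.toReal_mul, ENNReal.toReal_pow]
    norm_num
  have hd1 : (2*m) / 2 = m := by omega
  have hd2 : (2*m + 2) / 2 = m + 1 := by omega
  constructor
  · rw [htoReal, hd1, hd2]
    exact SSRW3.real_eq_one m
  · rw [htoReal]
    exact SSRW3.real_eq_two m hm1
end

section
/- For a simple symmetric random walk on ℤ started at 0, lim_{t→∞} √t · P(S_l ≤ S_t for all 0 ≤ l ≤ t) = √(2/π). -/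
open MeasureTheory ProbabilityTheory Filter

namespace RW10
open Finset Real Nat



def val (b : Bool) : ℤ := cond b 1 (-1)

def ext' {t : ℕ} (ε : Fin t → Bool) (i : ℕ) : ℤ :=
  if h : i < t then val (ε ⟨i, h⟩) else 0

def ps {t : ℕ} (ε : Fin t → Bool) (l : ℕ) : ℤ :=
  ∑ i ∈ Finset.range l, ext' ε i

lemma val_one_or (b : Bool) : val b = 1 ∨ val b = -1 := by cases b <;> simp [val]

lemma ps_succ {t : ℕ} (ε : Fin t → Bool) (l : ℕ) :
    ps ε (l + 1) = ps ε l + ext' ε l := Finset.sum_range_succ _ _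

lemma ps_le {t : ℕ} (ε : Fin t → Bool) (l : ℕ) : ps ε l ≤ l := by
  induction l with
  | zero => simp [ps]
  | succ n ih =>
    rw [ps_succ]
    have : ext' ε n ≤ 1 := by
      unfold ext'; split
      · rcases val_one_or (ε ⟨n, by assumption⟩) with h | h <;> omega
      · norm_num
    push_cast; push_cast at ih; omega

lemma ps_parity {t : ℕ} (ε : Fin t → Bool) (l : ℕ) (hl : l ≤ t) :
    (ps ε l + l) % 2 = 0 := by
  induction l with
  | zero => simp [ps]
  | succ n ih =>
    have hn := ih (by omega)
    rw [ps_succ]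
    have : ext' ε n = 1 ∨ ext' ε n = -1 := by
      unfold ext'; rw [dif_pos (by omega)]; exact val_one_or _
    push_cast; push_cast at hn; omega

lemma ext'_snoc {t : ℕ} (ε : Fin t → Bool) (b : Bool) (i : ℕ) :
    ext' (Fin.snoc ε b) i = if i < t then ext' ε i else if i = t then val b else 0 := by
  rcases lt_trichotomy i t with h | h | h
  · rw [if_pos h]
    unfold ext'
    rw [dif_pos (by omega), dif_pos h]
    have : (⟨i, by omega⟩ : Fin (t+1)) = Fin.castSucc ⟨i, h⟩ := rfl
    rw [this, Fin.snoc_castSucc]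
  · subst h
    rw [if_neg (by omega), if_pos rfl]
    unfold ext'
    rw [dif_pos (by omega)]
    have : (⟨i, by omega⟩ : Fin (i+1)) = Fin.last i := rfl
    rw [this, Fin.snoc_last]
  · rw [if_neg (by omega), if_neg (by omega)]
    unfold ext'
    rw [dif_neg (by omega)]

lemma ps_snoc {t : ℕ} (ε : Fin t → Bool) (b : Bool) (l : ℕ) (hl : l ≤ t) :
    ps (Fin.snoc ε b) l = ps ε l := by
  unfold ps
  refine Finset.sum_congr rfl fun i hi => ?_
  rw [ext'_snoc, if_pos (by simp at hi; omega)]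

lemma ps_snoc_top {t : ℕ} (ε : Fin t → Bool) (b : Bool) :
    ps (Fin.snoc ε b) (t + 1) = ps ε t + val b := by
  rw [ps_succ, ps_snoc _ _ _ le_rfl, ext'_snoc, if_neg (by omega), if_pos rfl]

/-- nonneg paths of length `t` ending at height `j` -/
def B (t j : ℕ) : Finset (Fin t → Bool) :=
  univ.filter (fun ε => (∀ l ≤ t, 0 ≤ ps ε l) ∧ ps ε t = j)

lemma snoc_inj {t : ℕ} (b : Bool) :
    Function.Injective (fun ε : Fin t → Bool => (Fin.snoc ε b : Fin (t+1) → Bool)) := by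
  intro x y h
  have := congrArg Fin.init h
  simpa [Fin.init_snoc] using this

lemma mem_B_snoc {t j : ℕ} (ε : Fin t → Bool) (b : Bool) :
    (Fin.snoc ε b : Fin (t+1) → Bool) ∈ B (t+1) j ↔
      ((∀ l ≤ t, 0 ≤ ps ε l) ∧ ps ε t + val b = j ∧ 0 ≤ ps ε t + val b) := by
  simp only [B, mem_filter, mem_univ, true_and]
  constructor
  · rintro ⟨h1, h2⟩
    have h3 : ∀ l ≤ t, 0 ≤ ps ε l := fun l hl => by
      have := h1 l (by omega); rwa [ps_snoc _ _ _ hl] at this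
    rw [ps_snoc_top] at h2
    exact ⟨h3, h2, by omega⟩
  · rintro ⟨h1, h2, h3⟩
    constructor
    · intro l hl
      rcases Nat.lt_or_ge l (t+1) with h | h
      · rw [ps_snoc _ _ _ (by omega)]; exact h1 l (by omega)
      · have : l = t + 1 := by omega
        subst this; rw [ps_snoc_top]; omega
    · rw [ps_snoc_top]; exact h2

lemma snoc_decomp {t : ℕ} (η : Fin (t+1) → Bool) :
    η = Fin.snoc (Fin.init η) (η (Fin.last t)) := (Fin.snoc_init_self η).symm

lemma B_succ_zero (t : ℕ) :
    B (t+1) 0 = (B t 1).image (fun ε => (Fin.snoc ε false : Fin (t+1) → Bool)) := by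
  ext η
  rw [snoc_decomp η]
  set ε := Fin.init η
  set b := η (Fin.last t)
  clear_value ε b
  simp only [Finset.mem_image, mem_B_snoc]
  constructor
  · rintro ⟨h1, h2, h3⟩
    have h0 := h1 t le_rfl
    have hb : b = false := by
      cases b
      · rfl
      · exfalso; simp [val] at h2; omega
    subst hb
    simp [val] at h2
    refine ⟨ε, ?_, rfl⟩
    simp only [B, mem_filter, mem_univ, true_and]
    exact ⟨h1, by push_cast; omega⟩
  · rintro ⟨ε', hε', heq⟩
    have hb : b = false := by
      have := congrArg (fun f => f (Fin.last t)) heq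
      simpa [Fin.snoc_last] using this
    subst hb
    have hee : ε' = ε := snoc_inj false heq
    subst hee
    simp only [B, mem_filter, mem_univ, true_and] at hε'
    obtain ⟨h1, h2⟩ := hε'
    push_cast at h2
    exact ⟨h1, by simp [val]; omega, by simp [val]; omega⟩

lemma B_succ_pos (t j : ℕ) :
    B (t+1) (j+1) = (B t j).image (fun ε => (Fin.snoc ε true : Fin (t+1) → Bool))
      ∪ (B t (j+2)).image (fun ε => (Fin.snoc ε false : Fin (t+1) → Bool)) := by
  ext η
  rw [snoc_decomp η]
  set ε := Fin.init η
  set b := η (Fin.last t)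
  clear_value ε b
  simp only [Finset.mem_union, Finset.mem_image, mem_B_snoc]
  constructor
  · rintro ⟨h1, h2, h3⟩
    cases b
    · right
      refine ⟨ε, ?_, rfl⟩
      simp only [B, mem_filter, mem_univ, true_and]
      simp [val] at h2
      exact ⟨h1, by push_cast; omega⟩
    · left
      refine ⟨ε, ?_, rfl⟩
      simp only [B, mem_filter, mem_univ, true_and]
      simp [val] at h2
      exact ⟨h1, by push_cast; omega⟩
  · rintro (⟨ε', hε', heq⟩ | ⟨ε', hε', heq⟩)
    · have hb : b = true := by
        have := congrArg (fun f => f (Fin.last t)) heq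
        simpa [Fin.snoc_last] using this
      subst hb
      have hee : ε' = ε := snoc_inj true heq
      subst hee
      simp only [B, mem_filter, mem_univ, true_and] at hε'
      obtain ⟨h1, h2⟩ := hε'
      have h0 := h1 t le_rfl
      push_cast at h2
      exact ⟨h1, by simp [val]; omega, by simp [val]; omega⟩
    · have hb : b = false := by
        have := congrArg (fun f => f (Fin.last t)) heq
        simpa [Fin.snoc_last] using this
      subst hb
      have hee : ε' = ε := snoc_inj false heq
      subst hee
      simp only [B, mem_filter, mem_univ, true_and] at hε'
      obtain ⟨h1, h2⟩ := hε'
      push_cast at h2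
      exact ⟨h1, by simp [val]; omega, by simp [val]; omega⟩

lemma image_disjoint {t j k : ℕ} :
    Disjoint ((B t j).image (fun ε => (Fin.snoc ε true : Fin (t+1) → Bool)))
      ((B t k).image (fun ε => (Fin.snoc ε false : Fin (t+1) → Bool))) := by
  rw [Finset.disjoint_left]
  rintro η h1 h2
  simp only [Finset.mem_image] at h1 h2
  obtain ⟨x, _, hx⟩ := h1
  obtain ⟨y, _, hy⟩ := h2
  have hx' := congrArg (fun f => f (Fin.last t)) hx
  have hy' := congrArg (fun f => f (Fin.last t)) hy
  simp [Fin.snoc_last] at hx' hy'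
  rw [hx'] at hy'
  exact Bool.noConfusion hy'

lemma B_card_zero (t : ℕ) : (B (t+1) 0).card = (B t 1).card := by
  rw [B_succ_zero, Finset.card_image_of_injective _ (snoc_inj false)]

lemma B_card_pos (t j : ℕ) :
    (B (t+1) (j+1)).card = (B t j).card + (B t (j+2)).card := by
  rw [B_succ_pos, Finset.card_union_of_disjoint image_disjoint,
    Finset.card_image_of_injective _ (snoc_inj true),
    Finset.card_image_of_injective _ (snoc_inj false)]


lemma B_card_odd (t j : ℕ) (h : (t + j) % 2 = 1) : (B t j).card = 0 := by
  rw [Finset.card_eq_zero]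
  ext ε
  simp only [B, mem_filter, mem_univ, true_and, Finset.notMem_empty, iff_false, not_and]
  intro _ hps
  have := ps_parity ε t le_rfl
  rw [hps] at this
  omega

lemma ps_zero_fun (ε : Fin 0 → Bool) (l : ℕ) : ps ε l = 0 := by
  unfold ps
  refine Finset.sum_eq_zero fun i _ => ?_
  unfold ext'
  rw [dif_neg (by omega)]

lemma B_card_even : ∀ t j, (t + j) % 2 = 0 → ((B t j).card : ℤ) =
    (t.choose ((t+j)/2) : ℤ) - (t.choose ((t+j)/2 + 1) : ℤ) := by
  intro t
  induction t with
  | zero =>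
    intro j hj
    rcases Nat.eq_zero_or_pos j with hj0 | hj0
    · subst hj0
      have : B 0 0 = univ := by
        ext ε; simp [B, ps_zero_fun]
      simp [this]
    · have h2 : 2 ≤ j := by omega
      have : B 0 j = ∅ := by
        ext ε
        simp only [B, mem_filter, mem_univ, true_and, Finset.notMem_empty, iff_false, not_and,
          ps_zero_fun]
        intro _
        omega
      rw [this]
      simp only [Nat.zero_add, Finset.card_empty]
      rw [Nat.choose_eq_zero_of_lt (by omega : 0 < j/2),
        Nat.choose_eq_zero_of_lt (by omega : 0 < j/2 + 1)]
      simp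
  | succ t ih =>
    intro j hj
    rcases Nat.eq_zero_or_pos j with hj0 | hj0
    · subst hj0
      simp only [Nat.add_zero]
      have ht : t % 2 = 1 := by omega
      set M := (t+1)/2 with hM
      have hM1 : 1 ≤ M := by omega
      have htM : t = 2*M - 1 := by omega
      have hcard := B_card_zero t
      rw [hcard, ih 1 (by omega)]
      have eidx : (t + 1)/2 = M := rfl
      rw [eidx]
      have e1 : (t+1).choose M = t.choose (M-1) + t.choose M := by
        have hMM : M = (M-1)+1 := by omega
        rw [hMM]
        exact Nat.choose_succ_succ _ _
      have e2 : (t+1).choose (M+1) = t.choose M + t.choose (M+1) :=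
        Nat.choose_succ_succ _ _
      have e3 : t.choose (M-1) = t.choose M := by
        have h := Nat.choose_symm (show M ≤ t by omega)
        rw [show t - M = M - 1 by omega] at h
        exact h
      rw [e1, e2, e3]
      push_cast
      ring
    · obtain ⟨j', rfl⟩ : ∃ j', j = j' + 1 := ⟨j-1, by omega⟩
      set m := (t+j')/2 with hm
      have hpar : (t + j') % 2 = 0 := by omega
      have hcard := B_card_pos t j'
      rw [hcard]
      push_cast
      rw [ih j' hpar, ih (j'+2) (by omega)]
      rw [show (t+(j'+2))/2 = m+1 by omega, show (t+1+(j'+1))/2 = m+1 by omega]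
      have e1 : (t+1).choose (m+1) = t.choose m + t.choose (m+1) :=
        Nat.choose_succ_succ _ _
      have e2 : (t+1).choose (m+1+1) = t.choose (m+1) + t.choose (m+1+1) :=
        Nat.choose_succ_succ _ _
      rw [e1, e2]
      push_cast
      ring

/-- nonneg paths of length t -/
def A (t : ℕ) : Finset (Fin t → Bool) :=
  univ.filter (fun ε => ∀ l ≤ t, 0 ≤ ps ε l)

lemma A_card_sum (t : ℕ) : (A t).card = ∑ j ∈ Finset.range (t+1), (B t j).card := by
  rw [Finset.card_eq_sum_card_fiberwise
    (f := fun ε => (ps ε t).toNat) (t := Finset.range (t+1))]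
  · refine Finset.sum_congr rfl fun j hj => ?_
    congr 1
    ext ε
    simp only [A, B, mem_filter, mem_univ, true_and]
    constructor
    · rintro ⟨h1, h2⟩
      refine ⟨h1, ?_⟩
      have := h1 t le_rfl
      omega
    · rintro ⟨h1, h2⟩
      exact ⟨h1, by omega⟩
  · intro ε hε
    simp only [A, mem_filter, mem_univ, true_and, Finset.mem_coe] at hε
    have h1 := hε t le_rfl
    have h2 := ps_le ε t
    simp only [Finset.mem_range, Finset.mem_coe]
    omega

lemma A_card (t : ℕ) : (A t).card = t.choose ((t+1)/2) := by
  have key : ((A t).card : ℤ) = (t.choose ((t+1)/2) : ℤ) := by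
    rw [A_card_sum]
    push_cast
    set m0 := (t+1)/2 with hm0
    set n := t + 1 - m0 with hn
    have htel := Finset.sum_range_sub' (f := fun i => (t.choose (m0 + i) : ℤ)) n
    have hstep : ∑ j ∈ Finset.range (t+1), ((B t j).card : ℤ)
        = ∑ j ∈ (Finset.range (t+1)).filter (fun j => (t+j) % 2 = 0), ((B t j).card : ℤ) := by
      rw [Finset.sum_filter_of_ne]
      intro j _ hne
      by_contra hpar
      exact hne (by rw [B_card_odd t j (by omega)]; norm_num)
    rw [hstep]
    have hmap : ∑ j ∈ (Finset.range (t+1)).filter (fun j => (t+j) % 2 = 0), ((B t j).card : ℤ)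
        = ∑ i ∈ Finset.range n, ((t.choose (m0 + i) : ℤ) - (t.choose (m0 + i + 1) : ℤ)) := by
      refine Finset.sum_nbij' (fun j => (t+j)/2 - m0) (fun i => 2*(m0+i) - t) ?_ ?_ ?_ ?_ ?_
      · intro j hj
        simp only [Finset.mem_filter, Finset.mem_range] at hj ⊢
        omega
      · intro i hi
        simp only [Finset.mem_filter, Finset.mem_range] at hi ⊢
        omega
      · intro j hj
        simp only [Finset.mem_filter, Finset.mem_range] at hj
        omega
      · intro i hi
        simp only [Finset.mem_range] at hi
        omega
      · intro j hj
        simp only [Finset.mem_filter, Finset.mem_range] at hj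
        rw [B_card_even t j hj.2]
        rw [show m0 + ((t+j)/2 - m0) = (t+j)/2 by omega]
    simp only [← Nat.add_assoc] at htel
    rw [hmap, htel]
    rw [show m0 + 0 = m0 by omega, show m0 + n = t + 1 by omega]
    simp [Nat.choose_eq_zero_of_lt (by omega : t < t + 1)]
  exact_mod_cast key

lemma ps_zero' {t : ℕ} (ε : Fin t → Bool) : ps ε 0 = 0 := by simp [ps]

lemma ext'_rev {t : ℕ} (ε : Fin t → Bool) (i : ℕ) (h : i < t) :
    ext' (ε ∘ Fin.rev) i = ext' ε (t - 1 - i) := by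
  unfold ext'
  rw [dif_pos h, dif_pos (by omega : t - 1 - i < t)]
  have : Fin.rev (⟨i, h⟩ : Fin t) = ⟨t - 1 - i, by omega⟩ := by
    apply Fin.ext
    simp [Fin.val_rev]
    omega
  simp [Function.comp, this]

lemma ps_rev {t : ℕ} (ε : Fin t → Bool) (l : ℕ) (hl : l ≤ t) :
    ps (ε ∘ Fin.rev) l = ps ε t - ps ε (t - l) := by
  have h1 : ps ε t - ps ε (t - l) = ∑ i ∈ Finset.Ico (t - l) t, ext' ε i := by
    rw [Finset.sum_Ico_eq_sub _ (by omega : t - l ≤ t)]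
    rfl
  rw [h1]
  unfold ps
  refine Finset.sum_nbij' (fun i => t - 1 - i) (fun i => t - 1 - i) ?_ ?_ ?_ ?_ ?_
  · intro i hi; simp only [Finset.mem_range, Finset.mem_Ico] at *; omega
  · intro i hi; simp only [Finset.mem_range, Finset.mem_Ico] at *; omega
  · intro i hi; simp only [Finset.mem_range] at hi; omega
  · intro i hi; simp only [Finset.mem_Ico] at hi; omega
  · intro i hi
    simp only [Finset.mem_range] at hi
    exact ext'_rev ε i (by omega)

/-- paths whose maximum is attained at the end -/
def M (t : ℕ) : Finset (Fin t → Bool) :=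
  univ.filter (fun ε => ∀ l ≤ t, ps ε l ≤ ps ε t)

lemma M_card_eq_A_card (t : ℕ) : (M t).card = (A t).card := by
  refine Finset.card_nbij' (fun ε => ε ∘ Fin.rev) (fun ε => ε ∘ Fin.rev) ?_ ?_ ?_ ?_
  · intro ε hε
    simp only [M, A, mem_coe, mem_filter, mem_univ, true_and] at *
    intro l hl
    rw [ps_rev ε l hl]
    have := hε (t - l) (by omega)
    omega
  · intro ε hε
    simp only [M, A, mem_coe, mem_filter, mem_univ, true_and] at *
    intro l hl
    rw [ps_rev ε l hl, ps_rev ε t le_rfl]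
    have h0 := hε (t - l) (by omega)
    simp [ps_zero']
    omega
  · intro ε _
    funext i
    simp [Function.comp, Fin.rev_rev]
  · intro ε _
    funext i
    simp [Function.comp, Fin.rev_rev]

lemma M_card (t : ℕ) : (M t).card = t.choose ((t+1)/2) := by
  rw [M_card_eq_A_card, A_card]

lemma factorial_eq (m : ℕ) (hm : 1 ≤ m) :
    ((m)! : ℝ) = Stirling.stirlingSeq m * (Real.sqrt (2*m) * ((m:ℝ)/Real.exp 1)^m) := by
  rw [Stirling.stirlingSeq, div_mul_cancel₀]
  have hm' : (0:ℝ) < m := by exact_mod_cast hm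
  positivity

lemma key_ident (n : ℕ) (hn : 1 ≤ n) :
    Real.sqrt (2*n) * ((Nat.centralBinom n : ℝ) / 4^n)
      = Real.sqrt 2 * Stirling.stirlingSeq (2*n) / (Stirling.stirlingSeq n)^2 := by
  have hx : (0:ℝ) < n := by exact_mod_cast hn
  have hcb : (Nat.centralBinom n : ℝ) = ((2*n)! : ℝ) / ((n)! : ℝ)^2 := by
    have h := Nat.choose_mul_factorial_mul_factorial (show n ≤ 2*n by omega)
    have h2 : (2*n - n) = n := by omega
    rw [h2] at h
    have : (Nat.centralBinom n : ℝ) * ((n)! * (n)!) = ((2*n)! : ℝ) := by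
      rw [Nat.centralBinom]
      push_cast [← h]
      ring
    field_simp
    rw [sq]
    linarith [this]
  have ha := factorial_eq n hn
  have hb := factorial_eq (2*n) (by omega)
  set a := Stirling.stirlingSeq n with hadef
  set b := Stirling.stirlingSeq (2*n) with hbdef
  have hapos : 0 < a := by
    obtain ⟨m, rfl⟩ : ∃ m, n = m + 1 := ⟨n - 1, by omega⟩
    exact Stirling.stirlingSeq'_pos m
  have hbpos : 0 < b := by
    obtain ⟨m, hm⟩ : ∃ m, 2*n = m + 1 := ⟨2*n - 1, by omega⟩
    rw [hbdef, hm]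
    exact Stirling.stirlingSeq'_pos m
  have hsq : Real.sqrt (2*(n:ℝ)) = Real.sqrt 2 * Real.sqrt n := Real.sqrt_mul (by norm_num) _
  have hsq4 : Real.sqrt (2*((2*n : ℕ):ℝ)) = 2 * Real.sqrt n := by
    push_cast
    rw [show (2:ℝ)*(2*(n:ℝ)) = 4 * n by ring, Real.sqrt_mul (by norm_num) (n:ℝ),
      show (4:ℝ) = 2^2 by norm_num, Real.sqrt_sq (by norm_num)]
  have hpow : (((2*n : ℕ):ℝ)/Real.exp 1)^(2*n) = 4^n * (((n:ℝ)/Real.exp 1)^n)^2 := by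
    push_cast
    rw [show (2*(n:ℝ))/Real.exp 1 = 2 * ((n:ℝ)/Real.exp 1) by ring, mul_pow, pow_mul,
      show ((2:ℝ)^2) = 4 by norm_num, ← pow_mul, pow_mul]
    ring
  rw [hcb, ha, hb, hsq4, hpow, hsq]
  have h1 : Real.sqrt (n:ℝ) ≠ 0 := by positivity
  have h2 : ((n:ℝ)/Real.exp 1)^n ≠ 0 := by positivity
  have h3 : Real.sqrt 2 ≠ 0 := by positivity
  field_simp
  ring_nf
  rw [Real.sq_sqrt (by norm_num : (0:ℝ) ≤ 2)]

lemma tendsto_sqrt_central :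
    Tendsto (fun n : ℕ => Real.sqrt (2*n) * ((Nat.centralBinom n : ℝ) / 4^n))
      atTop (nhds (Real.sqrt (2/Real.pi))) := by
  have hpi : 0 < Real.pi := Real.pi_pos
  have hlim : Tendsto (fun n : ℕ => Real.sqrt 2 * Stirling.stirlingSeq (2*n) / (Stirling.stirlingSeq n)^2)
      atTop (nhds (Real.sqrt 2 * Real.sqrt Real.pi / (Real.sqrt Real.pi)^2)) := by
    apply Tendsto.div
    · exact (Stirling.tendsto_stirlingSeq_sqrt_pi.comp
        (tendsto_atTop_atTop_of_monotone (fun a b h => by omega)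
          (fun b => ⟨b, by omega⟩))).const_mul _
    · exact Stirling.tendsto_stirlingSeq_sqrt_pi.pow 2
    · positivity
  have heq : Real.sqrt 2 * Real.sqrt Real.pi / (Real.sqrt Real.pi)^2 = Real.sqrt (2/Real.pi) := by
    rw [Real.sq_sqrt hpi.le, Real.sqrt_div (by norm_num : (0:ℝ) ≤ 2)]
    rw [div_eq_div_iff (by positivity) (by positivity : Real.sqrt Real.pi ≠ 0)]
    rw [mul_assoc, Real.mul_self_sqrt hpi.le]
  rw [heq] at hlim
  apply hlim.congr'
  filter_upwards [eventually_ge_atTop 1] with n hn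
  exact (key_ident n hn).symm


lemma tendsto_of_even_odd {f : ℕ → ℝ} {a : ℝ}
    (he : Tendsto (fun n => f (2*n)) atTop (nhds a))
    (ho : Tendsto (fun n => f (2*n+1)) atTop (nhds a)) : Tendsto f atTop (nhds a) := by
  rw [Metric.tendsto_atTop] at *
  intro ε hε
  obtain ⟨N1, h1⟩ := he ε hε
  obtain ⟨N2, h2⟩ := ho ε hε
  refine ⟨2*N1 + 2*N2 + 1, fun t ht => ?_⟩
  rcases Nat.even_or_odd t with ⟨k, hk⟩ | ⟨k, hk⟩
  · have hkt : t = 2*k := by omega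
    rw [hkt]; exact h1 k (by omega)
  · have hkt : t = 2*k+1 := by omega
    rw [hkt]; exact h2 k (by omega)

lemma choose_odd_eq (n : ℕ) : 2 * (2*n+1).choose (n+1) = Nat.centralBinom (n+1) := by
  have hp := Nat.choose_succ_succ' (2*n+1) n
  have h2 : (2*n+1).choose n = (2*n+1).choose (n+1) := by
    have h := Nat.choose_symm (show n+1 ≤ 2*n+1 by omega)
    rw [show 2*n+1 - (n+1) = n by omega] at h
    exact h
  have h3 : Nat.centralBinom (n+1) = (2*(n+1)).choose (n+1) := rfl
  rw [h3, show 2*(n+1) = 2*n+1+1 by ring]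
  omega

lemma main_analysis :
    Tendsto (fun t : ℕ => Real.sqrt t * ((t.choose ((t+1)/2) : ℝ) / 2^t))
      atTop (nhds (Real.sqrt (2/Real.pi))) := by
  apply tendsto_of_even_odd
  · apply tendsto_sqrt_central.congr
    intro n
    have h1 : (2*n+1)/2 = n := by omega
    rw [h1]
    have h2 : (2*n).choose n = Nat.centralBinom n := rfl
    rw [h2]
    have h3 : ((2:ℝ))^(2*n) = 4^n := by rw [pow_mul]; norm_num
    rw [h3]
    push_cast
    ring
  · -- odd case
    have hrat : Tendsto (fun n : ℕ => Real.sqrt ((2*n+1 : ℕ) : ℝ) / Real.sqrt ((2*(n+1) : ℕ) : ℝ))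
        atTop (nhds 1) := by
      have hbase : Tendsto (fun n : ℕ => ((2*n+1 : ℕ) : ℝ) / ((2*(n+1) : ℕ) : ℝ)) atTop (nhds 1) := by
        have h0 : Tendsto (fun n : ℕ => 1 - 1 / (((2*n+1 : ℕ) : ℝ) + 1)) atTop (nhds 1) := by
          have := (tendsto_one_div_add_atTop_nhds_zero_nat (𝕜 := ℝ)).comp
            (tendsto_atTop_atTop_of_monotone (f := fun n : ℕ => 2*n+1)
              (fun a b h => by dsimp only; omega) (fun b => ⟨b, by omega⟩))
          have h2 := (tendsto_const_nhds (x := (1:ℝ)) (f := atTop)).sub this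
          simpa using h2
        apply h0.congr
        intro n
        push_cast
        have hx : (2*(n:ℝ)+1) + 1 ≠ 0 := by positivity
        field_simp
        ring
      have hsq := (Real.continuous_sqrt.tendsto 1).comp hbase
      simp only [Real.sqrt_one] at hsq
      apply hsq.congr
      intro n
      simp only [Function.comp_apply]
      rw [Real.sqrt_div (by positivity) _]
    have hcb := tendsto_sqrt_central.comp (tendsto_add_atTop_nat 1)
    have hprod := hrat.mul hcb
    rw [one_mul] at hprod
    apply hprod.congr
    intro n
    simp only [Function.comp_apply]
    have h1 : (2*n+1+1)/2 = n+1 := by omega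
    rw [h1]
    have h2 : ((2*n+1).choose (n+1) : ℝ) = (Nat.centralBinom (n+1) : ℝ) / 2 := by
      have := choose_odd_eq n
      have h3 : (2 : ℝ) * ((2*n+1).choose (n+1) : ℝ) = (Nat.centralBinom (n+1) : ℝ) := by
        exact_mod_cast this
      linarith
    rw [h2]
    have hs : Real.sqrt ((2*(n+1):ℕ):ℝ) ≠ 0 := by
      have : (0:ℝ) < ((2*(n+1):ℕ):ℝ) := by positivity
      positivity
    have h4 : ((2:ℝ))^(2*n+1) = 2 * 4^n := by
      rw [pow_succ, pow_mul]; norm_num; ring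
    push_cast
    push_cast at hs
    rw [h4]
    have h5 : (4:ℝ)^(n+1) = 4 * 4^n := by ring
    rw [h5]
    field_simp
    ring

end RW10

open MeasureTheory ProbabilityTheory Filter

theorem stmt10 {Ω : Type*} [MeasurableSpace Ω] (P : Measure Ω) [IsProbabilityMeasure P]
    (X : ℕ → Ω → ℤ) (hX : ∀ i, Measurable (X i))
    (hindep : iIndepFun X P)
    (h1 : ∀ i, P {ω | X i ω = 1} = 1/2)
    (h2 : ∀ i, P {ω | X i ω = -1} = 1/2)
    (S : ℕ → Ω → ℤ) (hS : ∀ n ω, S n ω = ∑ i ∈ Finset.range n, X i ω) :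
    Tendsto (fun t : ℕ =>
        Real.sqrt t * (P {ω | ∀ l ≤ t, S l ω ≤ S t ω}).toReal)
      atTop (nhds (Real.sqrt (2 / Real.pi))) := by
  have key : ∀ t : ℕ, (P {ω | ∀ l ≤ t, S l ω ≤ S t ω}).toReal
      = (t.choose ((t+1)/2) : ℝ) / 2^t := by
    intro t
    set E : Set Ω := {ω | ∀ l ≤ t, S l ω ≤ S t ω} with hE
    set C : (Fin t → Bool) → Set Ω :=
      fun ε => ⋂ i ∈ Finset.range t, X i ⁻¹' {RW10.ext' ε i} with hC
    -- each constraint set preimage identity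
    have hmemC : ∀ ε ω, ω ∈ C ε ↔ ∀ i < t, X i ω = RW10.ext' ε i := by
      intro ε ω
      simp only [hC, Set.mem_iInter, Finset.mem_range, Set.mem_preimage,
        Set.mem_singleton_iff]
    -- S determined on C ε
    have hCS : ∀ ε ω, ω ∈ C ε → ∀ l ≤ t, S l ω = RW10.ps ε l := by
      intro ε ω hω l hl
      rw [hS]
      refine Finset.sum_congr rfl fun i hi => ?_
      simp only [Finset.mem_range] at hi
      exact (hmemC ε ω).mp hω i (by omega)
    -- probability of each cylinder
    have hCmeas : ∀ ε, MeasurableSet (C ε) := by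
      intro ε
      exact MeasurableSet.biInter (Finset.range t).countable_toSet
        (fun i _ => (hX i) (measurableSet_singleton _))
    have hfactor : ∀ (i : ℕ), i < t → ∀ (ε : Fin t → Bool),
        P (X i ⁻¹' {RW10.ext' ε i}) = 1/2 := by
      intro i hi ε
      have hv : RW10.ext' ε i = RW10.val (ε ⟨i, hi⟩) := by unfold RW10.ext'; rw [dif_pos hi]
      rw [hv]
      cases hb : ε ⟨i, hi⟩
      · have : X i ⁻¹' {RW10.val false} = {ω | X i ω = -1} := by
          ext ω; simp [RW10.val]
        rw [this]; exact h2 i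
      · have : X i ⁻¹' {RW10.val true} = {ω | X i ω = 1} := by
          ext ω; simp [RW10.val]
        rw [this]; exact h1 i
    have hCprob : ∀ ε, P (C ε) = (1/2 : ENNReal)^t := by
      intro ε
      rw [hC]
      rw [hindep.meas_biInter (S := Finset.range t)
        (s := fun i => X i ⁻¹' {RW10.ext' ε i})
        (fun i _ => ⟨{RW10.ext' ε i}, measurableSet_singleton _, rfl⟩)]
      rw [Finset.prod_congr rfl (fun i hi => hfactor i (Finset.mem_range.mp hi) ε)]
      rw [Finset.prod_const, Finset.card_range]
    -- the union
    set U : Set Ω := ⋃ ε ∈ RW10.M t, C ε with hU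
    have hsub1 : U ⊆ E := by
      intro ω hω
      simp only [hU, Set.mem_iUnion] at hω
      obtain ⟨ε, hεM, hωC⟩ := hω
      simp only [RW10.M, Finset.mem_filter, Finset.mem_univ, true_and] at hεM
      intro l hl
      rw [hCS ε ω hωC l hl, hCS ε ω hωC t le_rfl]
      exact hεM l hl
    set G : Set Ω := {ω | ∀ i < t, X i ω = 1 ∨ X i ω = -1} with hG
    have hsub2 : E ⊆ U ∪ Gᶜ := by
      intro ω hω
      by_cases hωG : ω ∈ G
      · left
        set ε : Fin t → Bool := fun i => decide (X i.val ω = 1) with hε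
        have hωC : ω ∈ C ε := by
          rw [hmemC]
          intro i hi
          have hext : RW10.ext' ε i = RW10.val (decide (X i ω = 1)) := by
            unfold RW10.ext'; rw [dif_pos hi]
          rw [hext]
          rcases hωG i hi with h | h
          · have hd : decide (X i ω = 1) = true := by simp [h]
            rw [hd]
            simpa [RW10.val] using h
          · have hd : decide (X i ω = 1) = false := by
              simp only [decide_eq_false_iff_not]
              rw [h]; norm_num
            rw [hd]
            simpa [RW10.val] using h
        simp only [hU, Set.mem_iUnion]
        refine ⟨ε, ?_, hωC⟩
        simp only [RW10.M, Finset.mem_filter, Finset.mem_univ, true_and]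
        intro l hl
        rw [← hCS ε ω hωC l hl, ← hCS ε ω hωC t le_rfl]
        exact hω l hl
      · right; exact hωG
    have hGc : P Gᶜ = 0 := by
      have hsub : Gᶜ ⊆ ⋃ i ∈ Finset.range t, ({ω | X i ω = 1} ∪ {ω | X i ω = -1})ᶜ := by
        intro ω hω
        simp only [hG, Set.mem_compl_iff, Set.mem_setOf_eq, not_forall] at hω
        obtain ⟨i, hi, hne⟩ := hω
        simp only [Set.mem_iUnion, Finset.mem_range]
        exact ⟨i, hi, by simp only [Set.mem_compl_iff, Set.mem_union, Set.mem_setOf_eq]; tauto⟩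
      have hzero : ∀ i : ℕ, P (({ω | X i ω = 1} ∪ {ω | X i ω = -1})ᶜ) = 0 := by
        intro i
        have hm1 : MeasurableSet {ω | X i ω = 1} := (hX i) (measurableSet_singleton 1)
        have hm2 : MeasurableSet {ω | X i ω = -1} := (hX i) (measurableSet_singleton (-1))
        have hdisj : Disjoint {ω | X i ω = 1} {ω | X i ω = -1} := by
          rw [Set.disjoint_left]
          intro ω hω1 hω2
          simp only [Set.mem_setOf_eq] at hω1 hω2
          rw [hω1] at hω2; norm_num at hω2
        have huni : P ({ω | X i ω = 1} ∪ {ω | X i ω = -1}) = 1 := by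
          rw [measure_union hdisj hm2, h1 i, h2 i]
          rw [ENNReal.div_add_div_same]
          have : (1:ENNReal) + 1 = 2 := by norm_num
          rw [this]
          exact ENNReal.div_self (by norm_num) (by norm_num)
        rw [measure_compl (hm1.union hm2) (measure_ne_top P _), huni, measure_univ, tsub_self]
      refine le_antisymm ?_ zero_le
      calc P Gᶜ ≤ P (⋃ i ∈ Finset.range t, ({ω | X i ω = 1} ∪ {ω | X i ω = -1})ᶜ) :=
            measure_mono hsub
        _ ≤ ∑ i ∈ Finset.range t, P (({ω | X i ω = 1} ∪ {ω | X i ω = -1})ᶜ) :=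
            measure_biUnion_finset_le _ _
        _ = 0 := Finset.sum_eq_zero fun i _ => hzero i
    have hdisjC : Set.PairwiseDisjoint (↑(RW10.M t)) C := by
      intro ε _ ε' _ hne
      rw [Function.onFun, Set.disjoint_left]
      intro ω hω1 hω2
      obtain ⟨i, hi⟩ := Function.ne_iff.mp hne
      have e1 := (hmemC ε ω).mp hω1 i.val i.isLt
      have e2 := (hmemC ε' ω).mp hω2 i.val i.isLt
      have hvne : RW10.ext' ε i.val ≠ RW10.ext' ε' i.val := by
        unfold RW10.ext'
        rw [dif_pos i.isLt, dif_pos i.isLt]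
        have hii : (⟨i.val, i.isLt⟩ : Fin t) = i := rfl
        rw [hii]
        cases hb : ε i <;> cases hb' : ε' i <;>
          simp_all [RW10.val]
      exact hvne (e1 ▸ e2 ▸ rfl)
    have hPU : P U = ((RW10.M t).card : ENNReal) * (1/2 : ENNReal)^t := by
      rw [hU, measure_biUnion_finset hdisjC (fun ε _ => hCmeas ε)]
      rw [Finset.sum_congr rfl (fun ε _ => hCprob ε), Finset.sum_const, nsmul_eq_mul]
    have hPE : P E = ((RW10.M t).card : ENNReal) * (1/2 : ENNReal)^t := by
      rw [← hPU]
      refine le_antisymm ?_ (measure_mono hsub1)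
      calc P E ≤ P (U ∪ Gᶜ) := measure_mono hsub2
        _ ≤ P U + P Gᶜ := measure_union_le _ _
        _ = P U := by rw [hGc, add_zero]
    rw [hPE, RW10.M_card]
    rw [ENNReal.toReal_mul, ENNReal.toReal_pow, ENNReal.toReal_div, ENNReal.toReal_one,
      ENNReal.toReal_ofNat, ENNReal.toReal_natCast, div_pow, one_pow, mul_one_div]
  have := RW10.main_analysis
  apply this.congr
  intro t
  rw [key t]
end

section
/- For a simple symmetric random walk on ℤ started at 0, lim_{m→∞} √m · P(S_l > S_0 for all 0 < l ≤ m) = 1/√(2π). -/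
open MeasureTheory ProbabilityTheory Filter Real
open scoped ENNReal Topology

namespace Stmt11Aux
def ok1 (A : Finset ℕ) (l : ℕ) : Prop := l ≤ 2 * (A ∩ Finset.Ico 1 (1 + l)).card
instance : ∀ A l, Decidable (ok1 A l) := fun A l => by unfold ok1; infer_instance
def gset (k r : ℕ) : Finset (Finset ℕ) :=
  (Finset.Ico 1 (1 + k)).powerset.filter (fun A => A.card = r ∧ ∀ l ≤ k, ok1 A l)
def g (k r : ℕ) : ℕ := (gset k r).card

lemma g_rec {k r : ℕ} (h : k + 1 ≤ 2 * r) : g (k + 1) r = g k r + g k (r - 1) := by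
  have hr : 1 ≤ r := by omega
  have hnotmem : k + 1 ∉ Finset.Ico 1 (1 + k) := by
    simp only [Finset.mem_Ico]; omega
  have hIco : Finset.Ico 1 (1 + (k + 1)) = insert (k + 1) (Finset.Ico 1 (1 + k)) := by
    ext x; simp only [Finset.mem_Ico, Finset.mem_insert]; omega
  have e1 : (Finset.Ico 1 (1+k)).powerset.filter
      (fun A => A.card = r ∧ ∀ l ≤ k + 1, ok1 A l) = gset k r := by
    apply Finset.filter_congr
    intro A hA
    rw [Finset.mem_powerset] at hA
    have hAk : A ∩ Finset.Ico 1 (1 + (k+1)) = A := by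
      apply Finset.inter_eq_left.mpr
      exact hA.trans (by rw [hIco]; exact Finset.subset_insert _ _)
    constructor
    · rintro ⟨h1, h2⟩; exact ⟨h1, fun l hl => h2 l (by omega)⟩
    · rintro ⟨h1, h2⟩
      refine ⟨h1, fun l hl => ?_⟩
      rcases Nat.lt_or_ge l (k+1) with hlt | hge
      · exact h2 l (by omega)
      · have : l = k + 1 := by omega
        subst this
        rw [ok1, hAk, h1]; omega
  have e2 : (Finset.Ico 1 (1+k)).powerset.filter
      (fun A => (insert (k+1) A).card = r ∧ ∀ l ≤ k + 1, ok1 (insert (k+1) A) l)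
      = gset k (r - 1) := by
    apply Finset.filter_congr
    intro A hA
    rw [Finset.mem_powerset] at hA
    have hkA : k + 1 ∉ A := fun hc => hnotmem (hA hc)
    have hcard : (insert (k+1) A).card = A.card + 1 := Finset.card_insert_of_notMem hkA
    have hinter : ∀ l ≤ k, insert (k+1) A ∩ Finset.Ico 1 (1 + l) = A ∩ Finset.Ico 1 (1 + l) := by
      intro l hl
      apply Finset.insert_inter_of_notMem
      simp only [Finset.mem_Ico]; omega
    constructor
    · rintro ⟨h1, h2⟩
      refine ⟨by omega, fun l hl => ?_⟩
      have := h2 l (by omega)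
      rwa [ok1, hinter l hl] at this
    · rintro ⟨h1, h2⟩
      refine ⟨by omega, fun l hl => ?_⟩
      rcases Nat.lt_or_ge l (k+1) with hlt | hge
      · have := h2 l (by omega)
        rw [ok1, hinter l (by omega)]
        exact this
      · have : l = k + 1 := by omega
        subst this
        rw [ok1]
        have hi : insert (k+1) A ∩ Finset.Ico 1 (1 + (k+1)) = insert (k+1) A := by
          apply Finset.inter_eq_left.mpr
          rw [hIco]
          exact Finset.insert_subset_insert _ hA
        rw [hi, hcard]
        omega
  have hinj : Set.InjOn (insert (k + 1)) ((gset k (r - 1) : Finset (Finset ℕ)) : Set (Finset ℕ)) := by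
    intro A hA B hB hAB
    simp only [Finset.mem_coe, gset, Finset.mem_filter, Finset.mem_powerset] at hA hB
    have : (insert (k+1) A).erase (k+1) = (insert (k+1) B).erase (k+1) := by rw [hAB]
    rwa [Finset.erase_insert (fun hc => hnotmem (hA.1 hc)),
      Finset.erase_insert (fun hc => hnotmem (hB.1 hc))] at this
  have hdisj : Disjoint (gset k r) ((gset k (r - 1)).image (insert (k + 1))) := by
    rw [Finset.disjoint_left]
    intro A hA hA2
    simp only [gset, Finset.mem_filter, Finset.mem_powerset] at hA
    obtain ⟨B, hB, rfl⟩ := Finset.mem_image.1 hA2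
    exact hnotmem (hA.1 (Finset.mem_insert_self _ _))
  have hsetEq : gset (k + 1) r = gset k r ∪ (gset k (r - 1)).image (insert (k + 1)) := by
    conv_lhs => rw [gset]
    rw [hIco, Finset.powerset_insert, Finset.filter_union, Finset.filter_image, e1, e2]
  rw [g, g, g, hsetEq, Finset.card_union_of_disjoint hdisj, Finset.card_image_of_injOn hinj]
end Stmt11Aux

namespace Stmt11Aux
lemma g_zero {k r : ℕ} (h : 2 * r < k) : g k r = 0 := by
  rw [g, Finset.card_eq_zero, Finset.eq_empty_iff_forall_notMem]
  intro A hA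
  simp only [gset, Finset.mem_filter, Finset.mem_powerset] at hA
  obtain ⟨hsub, hcard, hok⟩ := hA
  have := hok k le_rfl
  rw [ok1, Finset.inter_eq_left.mpr (hsub.trans (by intro x; simp only [Finset.mem_Ico]; omega))] at this
  omega

lemma g_zero' {k r : ℕ} (h : k < r) : g k r = 0 := by
  rw [g, Finset.card_eq_zero, Finset.eq_empty_iff_forall_notMem]
  intro A hA
  simp only [gset, Finset.mem_filter, Finset.mem_powerset] at hA
  obtain ⟨hsub, hcard, -⟩ := hA
  have := Finset.card_le_card hsub
  rw [Nat.card_Ico] at this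
  omega

lemma g_eq : ∀ k r, k ≤ 2 * r → g k r + k.choose (r + 1) = k.choose r := by
  intro k
  induction k with
  | zero =>
    intro r _
    rcases r with _ | r
    · decide
    · rw [g_zero' (by omega)]
      simp [Nat.choose_eq_zero_of_lt]
  | succ k ih =>
    intro r h
    have hr : 1 ≤ r := by omega
    obtain ⟨t, rfl⟩ : ∃ t, r = t + 1 := ⟨r - 1, by omega⟩
    rw [g_rec h]
    simp only [Nat.add_sub_cancel]
    rw [Nat.choose_succ_succ k (t + 1), Nat.choose_succ_succ k t]
    simp only [Nat.succ_eq_add_one]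
    rcases Nat.lt_or_ge (2 * t) k with hlt | hge
    · -- 2t < k, so 2(t+1) = k+1, g k t = 0
      have hk : k = 2 * t + 1 := by omega
      rw [g_zero hlt]
      have ihr := ih (t + 1) (by omega)
      have hsymm : k.choose t = k.choose (t + 1) := by
        conv_lhs => rw [show t = k - (t + 1) by omega]
        exact Nat.choose_symm (by omega)
      omega
    · have ih1 := ih (t + 1) (by omega)
      have ih2 := ih t hge
      omega
end Stmt11Aux

namespace Stmt11Aux
def aset (k : ℕ) : Finset (Finset ℕ) :=
  (Finset.Ico 1 (1 + k)).powerset.filter (fun A => ∀ l ≤ k, ok1 A l)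

lemma a_eq (k : ℕ) : (aset k).card = k.choose ((k + 1) / 2) := by
  set c := (k + 1) / 2 with hc
  have hck : c ≤ k + 1 := by omega
  have hsum : (aset k).card = ∑ r ∈ Finset.range (k + 1), g k r := by
    rw [Finset.card_eq_sum_card_fiberwise (f := fun A => A.card) (t := Finset.range (k + 1))]
    · apply Finset.sum_congr rfl
      intro r _
      congr 1
      ext A
      simp only [aset, gset, Finset.mem_filter, Finset.mem_powerset]
      tauto
    · intro A hA
      simp only [Finset.mem_coe, aset, Finset.mem_filter, Finset.mem_powerset] at hA
      have := Finset.card_le_card hA.1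
      rw [Nat.card_Ico] at this
      simp only [Finset.mem_coe, Finset.mem_range]
      omega
  have hsum2 : ∑ r ∈ Finset.range (k + 1), g k r = ∑ r ∈ Finset.Ico c (k + 1), g k r := by
    rw [eq_comm]
    apply Finset.sum_subset
    · intro r hr
      simp only [Finset.mem_Ico] at hr
      simp only [Finset.mem_range]
      omega
    · intro r hr1 hr2
      simp only [Finset.mem_range] at hr1
      simp only [Finset.mem_Ico, not_and, not_le] at hr2
      exact g_zero (by omega)
  have key : ((∑ r ∈ Finset.Ico c (k + 1), g k r : ℕ) : ℤ) = (k.choose c : ℤ) := by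
    push_cast
    rw [Finset.sum_Ico_eq_sum_range]
    have : ∀ i ∈ Finset.range (k + 1 - c), (g k (c + i) : ℤ)
        = (k.choose (c + i) : ℤ) - (k.choose (c + (i + 1)) : ℤ) := by
      intro i _
      have h2 := g_eq k (c + i) (by omega)
      rw [show c + (i + 1) = c + i + 1 by ring]
      push_cast [← h2]
      ring
    rw [Finset.sum_congr rfl this, Finset.sum_range_sub' (fun i => (k.choose (c + i) : ℤ))]
    have h1 : c + (k + 1 - c) = k + 1 := by omega
    rw [h1, Nat.choose_succ_self]
    push_cast
    ring
  rw [hsum, hsum2]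
  exact_mod_cast key
end Stmt11Aux

namespace Stmt11Aux
instance gooddec (m : ℕ) : DecidablePred
    (fun A : Finset ℕ => ∀ l ∈ Finset.Icc 1 m, l < 2 * (A ∩ Finset.range l).card) :=
  fun _ => Finset.decidableDforallFinset

def goodset (m : ℕ) : Finset (Finset ℕ) :=
  (Finset.range m).powerset.filter
    (fun A => ∀ l ∈ Finset.Icc 1 m, l < 2 * (A ∩ Finset.range l).card)

lemma card_inter_erase {A : Finset ℕ} (h0 : 0 ∈ A) {l : ℕ} (hl : 0 < l) :
    (A ∩ Finset.range l).card = (A.erase 0 ∩ Finset.Ico 1 l).card + 1 := by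
  have : A ∩ Finset.range l = insert 0 (A.erase 0 ∩ Finset.Ico 1 l) := by
    ext x
    simp only [Finset.mem_inter, Finset.mem_range, Finset.mem_insert, Finset.mem_erase,
      Finset.mem_Ico]
    constructor
    · rintro ⟨hx, hxl⟩
      rcases Nat.eq_zero_or_pos x with rfl | hx0
      · exact Or.inl rfl
      · exact Or.inr ⟨⟨by omega, hx⟩, by omega, hxl⟩
    · rintro (rfl | ⟨⟨-, hx⟩, h1, h2⟩)
      · exact ⟨h0, hl⟩
      · exact ⟨hx, h2⟩
  rw [this, Finset.card_insert_of_notMem (by simp)]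

lemma mem_goodset_zero {m : ℕ} (hm : 1 ≤ m) {A : Finset ℕ} (hA : A ∈ goodset m) : 0 ∈ A := by
  simp only [goodset, Finset.mem_filter, Finset.mem_powerset] at hA
  have h1 := hA.2 1 (Finset.mem_Icc.2 ⟨le_rfl, hm⟩)
  by_contra h0
  have : A ∩ Finset.range 1 = ∅ := by
    ext x
    simp only [Finset.mem_inter, Finset.mem_range, Finset.notMem_empty, iff_false]
    rintro ⟨hx, hx1⟩
    interval_cases x
    exact h0 hx
  rw [this] at h1
  simp at h1

lemma goodset_card {m : ℕ} (hm : 1 ≤ m) : (goodset m).card = (m - 1).choose (m / 2) := by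
  have hIco : Finset.Ico 1 (1 + (m - 1)) = Finset.Ico 1 m := by
    congr 1
    omega
  have key : (goodset m).card = (aset (m - 1)).card := by
    apply Finset.card_bij (fun A _ => A.erase 0)
    · -- maps into aset
      intro A hA
      have h0 := mem_goodset_zero hm hA
      simp only [goodset, Finset.mem_filter, Finset.mem_powerset] at hA
      simp only [aset, Finset.mem_filter, Finset.mem_powerset, hIco]
      constructor
      · intro x hx
        simp only [Finset.mem_erase] at hx
        have := hA.1 hx.2
        simp only [Finset.mem_range] at this
        simp only [Finset.mem_Ico]
        omega
      · intro l hl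
        have := hA.2 (l + 1) (Finset.mem_Icc.2 ⟨by omega, by omega⟩)
        rw [card_inter_erase h0 (by omega)] at this
        rw [ok1, show (1 : ℕ) + l = l + 1 by ring]
        omega
    · -- inj
      intro A hA B hB hAB
      have hA0 := mem_goodset_zero hm hA
      have hB0 := mem_goodset_zero hm hB
      rw [← Finset.insert_erase hA0, ← Finset.insert_erase hB0, hAB]
    · -- surj
      intro B hB
      simp only [aset, Finset.mem_filter, Finset.mem_powerset, hIco] at hB
      have h0B : 0 ∉ B := fun hc => by
        have := hB.1 hc
        simp at this
      refine ⟨insert 0 B, ?_, by rw [Finset.erase_insert h0B]⟩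
      simp only [goodset, Finset.mem_filter, Finset.mem_powerset]
      constructor
      · intro x hx
        rcases Finset.mem_insert.1 hx with rfl | hx'
        · simp only [Finset.mem_range]; omega
        · have := hB.1 hx'
          simp only [Finset.mem_Ico] at this
          simp only [Finset.mem_range]
          omega
      · intro l hl
        rw [Finset.mem_Icc] at hl
        obtain ⟨hl1, hlm⟩ := hl
        have hok := hB.2 (l - 1) (by omega)
        rw [ok1] at hok
        have h0i : 0 ∈ insert 0 B := Finset.mem_insert_self _ _
        rw [card_inter_erase h0i (by omega), Finset.erase_insert h0B]
        have : (1 : ℕ) + (l - 1) = l := by omega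
        rw [this] at hok
        omega
  rw [key, a_eq]
  congr 1
  omega
end Stmt11Aux

namespace Stmt11Aux
lemma natkey (m : ℕ) (hm : 1 ≤ m) :
    2 * 4 ^ (m / 2) * ((m - 1).choose (m / 2)) = 2 ^ m * ((2 * (m / 2)).choose (m / 2)) := by
  have h4 : ∀ t : ℕ, (4:ℕ) ^ t = 2 ^ (2 * t) := fun t => by
    rw [show (4:ℕ) = 2 ^ 2 by norm_num, ← pow_mul]
  rcases Nat.even_or_odd m with ⟨k, hk⟩ | ⟨k, hk⟩
  · -- m = 2k, k ≥ 1
    obtain ⟨j, rfl⟩ : ∃ j, k = j + 1 := ⟨k - 1, by omega⟩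
    subst hk
    have e1 : (j + 1 + (j + 1)) / 2 = j + 1 := by omega
    have e2 : j + 1 + (j + 1) - 1 = 2 * j + 1 := by omega
    rw [e1, e2, show 2 * (j + 1) = 2 * j + 2 by ring,
      show j + 1 + (j + 1) = 2 * (j + 1) by ring]
    have hsym : (2 * j + 1).choose j = (2 * j + 1).choose (j + 1) := by
      rw [show (2 * j + 1).choose j = (2 * j + 1).choose (2 * j + 1 - (j + 1)) by congr 1; omega]
      exact Nat.choose_symm (by omega)
    have hpascal : (2 * j + 2).choose (j + 1) = (2 * j + 1).choose j + (2 * j + 1).choose (j + 1) := by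
      rw [show 2 * j + 2 = (2 * j + 1) + 1 by ring]
      exact Nat.choose_succ_succ _ _
    rw [hpascal, ← hsym, ← h4]
    ring
  · -- m = 2k + 1
    subst hk
    have e1 : (2 * k + 1) / 2 = k := by omega
    have e2 : 2 * k + 1 - 1 = 2 * k := by omega
    rw [e1, e2, h4, pow_succ, ← h4]
    ring

end Stmt11Aux

namespace Stmt11Aux

noncomputable def wseq (n : ℕ) : ℝ :=
  Real.sqrt (2 * n + 1) * ((2 * n).choose n) / 4 ^ n

lemma choose_real (n : ℕ) :
    (((2 * n).choose n : ℕ) : ℝ) = (2 * n).factorial / (n.factorial * n.factorial) := by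
  have h := Nat.choose_mul_factorial_mul_factorial (Nat.le_mul_of_pos_left n two_pos)
  have h2 : 2 * n - n = n := by omega
  rw [h2] at h
  have hne : (n.factorial : ℝ) ≠ 0 := Nat.cast_ne_zero.2 n.factorial_ne_zero
  field_simp
  rw [sq, ← mul_assoc]
  exact_mod_cast h

lemma wseq_sq (n : ℕ) : wseq n = Real.sqrt (1 / Real.Wallis.W n) := by
  have hW := Real.Wallis.W_eq_factorial_ratio n
  have hnn : (0:ℝ) ≤ Real.sqrt (2 * n + 1) * ((2 * n).choose n) / 4 ^ n := by positivity
  rw [wseq, ← Real.sqrt_sq hnn]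
  congr 1
  rw [hW]
  have hne : (n.factorial : ℝ) ≠ 0 := Nat.cast_ne_zero.2 n.factorial_ne_zero
  have hne2 : ((2*n).factorial : ℝ) ≠ 0 := Nat.cast_ne_zero.2 (2*n).factorial_ne_zero
  have hsq : Real.sqrt (2 * n + 1) ^ 2 = 2 * n + 1 := Real.sq_sqrt (by positivity)
  rw [div_pow, mul_pow, hsq, choose_real]
  rw [div_pow]
  have h4 : ((4:ℝ) ^ n) ^ 2 = 2 ^ (4 * n) := by
    rw [← pow_mul, show (4:ℝ) = 2^2 by norm_num, ← pow_mul]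
    ring_nf
  rw [h4]
  field_simp
end Stmt11Aux

namespace Stmt11Aux

lemma wseq_tendsto : Tendsto wseq atTop (𝓝 (Real.sqrt (2 / Real.pi))) := by
  have h1 : Tendsto (fun n => 1 / Real.Wallis.W n) atTop (𝓝 (2 / Real.pi)) := by
    have := Real.Wallis.tendsto_W_nhds_pi_div_two
    have h2 := this.inv₀ (by positivity)
    simp only [one_div]
    convert h2 using 2
    rw [inv_div]
  have h2 : Tendsto (fun n => Real.sqrt (1 / Real.Wallis.W n)) atTop
      (𝓝 (Real.sqrt (2 / Real.pi))) :=
    (Real.continuous_sqrt.continuousAt).tendsto.comp h1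
  exact Tendsto.congr (fun n => (wseq_sq n).symm) h2

lemma div2_tendsto : Tendsto (fun m : ℕ => m / 2) atTop atTop := by
  apply tendsto_atTop_atTop.2
  intro N
  exact ⟨2 * N, fun m hm => by omega⟩

lemma ratio_tendsto : Tendsto (fun m : ℕ => Real.sqrt m / Real.sqrt (2 * (m / 2 : ℕ) + 1))
    atTop (𝓝 1) := by
  have heq : ∀ m : ℕ, Real.sqrt m / Real.sqrt (2 * (m / 2 : ℕ) + 1)
      = Real.sqrt ((m : ℝ) / (2 * (m / 2 : ℕ) + 1)) := fun m =>
    (Real.sqrt_div (Nat.cast_nonneg m) _).symm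
  have hr : Tendsto (fun m : ℕ => (m : ℝ) / (2 * (m / 2 : ℕ) + 1)) atTop (𝓝 1) := by
    apply tendsto_of_tendsto_of_tendsto_of_le_of_le' (tendsto_natCast_div_add_atTop (1:ℝ))
      tendsto_const_nhds
    · filter_upwards [eventually_ge_atTop 1] with m hm
      have h1 : (2 * (m / 2 : ℕ) + 1 : ℝ) ≤ (m : ℝ) + 1 := by
        have h0 : 2 * (m / 2) ≤ m := by omega
        have : (2 * (m / 2 : ℕ) : ℝ) ≤ m := by exact_mod_cast h0
        linarith
      apply div_le_div_of_nonneg_left (by positivity) (by positivity) h1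
    · filter_upwards with m
      apply div_le_one_of_le₀
      · have h0 : m ≤ 2 * (m / 2) + 1 := by omega
        have : (m:ℝ) ≤ (2 * (m / 2 : ℕ) : ℕ) + 1 := by exact_mod_cast h0
        push_cast at this ⊢
        linarith
      · positivity
  have := (Real.continuous_sqrt.continuousAt (x := (1:ℝ))).tendsto.comp hr
  simp only [Function.comp_def, Real.sqrt_one] at this
  exact Tendsto.congr (fun m => (heq m).symm) this

end Stmt11Aux

namespace Stmt11Aux

def chi (A : Finset ℕ) (i : ℕ) : ℤ := if i ∈ A then 1 else -1

lemma sum_chi (A : Finset ℕ) (l : ℕ) :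
    ∑ i ∈ Finset.range l, chi A i = 2 * ((A ∩ Finset.range l).card : ℤ) - l := by
  have h : ∀ i, chi A i = (if i ∈ A then (2:ℤ) else 0) - 1 := by
    intro i; unfold chi; split <;> ring
  simp only [h]
  rw [Finset.sum_sub_distrib, Finset.sum_const, Finset.sum_ite_mem]
  rw [Finset.sum_const, Finset.card_range, Finset.inter_comm]
  push_cast
  ring

theorem measure_eq {Ω : Type*} [MeasurableSpace Ω] (P : Measure Ω) [IsProbabilityMeasure P]
    (X : ℕ → Ω → ℤ) (hX : ∀ i, Measurable (X i))
    (hindep : iIndepFun X P)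
    (h1 : ∀ i, P {ω | X i ω = 1} = 1/2)
    (h2 : ∀ i, P {ω | X i ω = -1} = 1/2) (m : ℕ) :
    P {ω | ∀ l, 0 < l → l ≤ m → 0 < ∑ i ∈ Finset.range l, X i ω}
      = ((goodset m).card : ℝ≥0∞) * 2⁻¹ ^ m := by
  classical
  set E := {ω | ∀ l, 0 < l → l ≤ m → 0 < ∑ i ∈ Finset.range l, X i ω} with hE
  set G := ⋂ i ∈ Finset.range m, X i ⁻¹' {1, -1} with hG
  set cyl := fun A : Finset ℕ => ⋂ i ∈ Finset.range m, X i ⁻¹' {chi A i} with hcyl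
  -- each singleton preimage has measure 1/2
  have hsingle : ∀ (i : ℕ) (c : ℤ), c = 1 ∨ c = -1 → P (X i ⁻¹' {c}) = 2⁻¹ := by
    intro i c hc
    have : X i ⁻¹' {c} = {ω | X i ω = c} := by ext ω; simp
    rcases hc with rfl | rfl
    · rw [this, h1 i]; norm_num
    · rw [this, h2 i]; norm_num
  have hcylP : ∀ A, P (cyl A) = 2⁻¹ ^ m := by
    intro A
    rw [hcyl]
    rw [hindep.measure_inter_preimage_eq_mul (Finset.range m)
      (sets := fun i => {chi A i}) (fun i _ => measurableSet_singleton _)]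
    rw [Finset.prod_congr rfl (fun i _ => hsingle i (chi A i)
      (by unfold chi; split <;> simp)), Finset.prod_const, Finset.card_range]
  have hcylMeas : ∀ A, MeasurableSet (cyl A) := fun A =>
    MeasurableSet.biInter (Set.to_countable _)
      (fun i _ => (hX i) (measurableSet_singleton _))
  -- sum formula on cylinders
  have hsum : ∀ (ω : Ω) (A : Finset ℕ), (∀ i ∈ Finset.range m, X i ω = chi A i) →
      ∀ l ≤ m, ∑ i ∈ Finset.range l, X i ω = 2 * ((A ∩ Finset.range l).card : ℤ) - l := by
    intro ω A hω l hl
    rw [← sum_chi A l]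
    apply Finset.sum_congr rfl
    intro i hi
    exact hω i (Finset.mem_range.2 (lt_of_lt_of_le (Finset.mem_range.1 hi) hl))
  -- decomposition
  have hunion : E ∩ G = ⋃ A ∈ goodset m, cyl A := by
    ext ω
    simp only [Set.mem_inter_iff, Set.mem_iUnion, hE, Set.mem_setOf_eq]
    constructor
    · rintro ⟨hEω, hGω⟩
      set A := (Finset.range m).filter (fun i => X i ω = 1) with hA
      have hXA : ∀ i ∈ Finset.range m, X i ω = chi A i := by
        intro i hi
        have hiG : X i ω ∈ ({1, -1} : Set ℤ) := by
          have := Set.mem_iInter₂.1 hGω i hi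
          exact this
        rcases hiG with hv | hv
        · rw [hv]; unfold chi
          rw [if_pos (Finset.mem_filter.2 ⟨hi, hv⟩)]
        · rw [Set.mem_singleton_iff] at hv
          rw [hv]; unfold chi
          rw [if_neg]
          intro hc
          rw [hA] at hc
          have := (Finset.mem_filter.1 hc).2
          rw [hv] at this
          norm_num at this
      refine ⟨A, ?_, Set.mem_biInter (fun i hi => by
        simp only [Set.mem_preimage, Set.mem_singleton_iff]; exact hXA i hi)⟩
      simp only [goodset, Finset.mem_filter, Finset.mem_powerset]
      refine ⟨Finset.filter_subset _ _, ?_⟩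
      intro l hl
      rw [Finset.mem_Icc] at hl
      have := hEω l (by omega) hl.2
      rw [hsum ω A hXA l hl.2] at this
      have : (l : ℤ) < 2 * ((A ∩ Finset.range l).card : ℤ) := by omega
      exact_mod_cast this
    · rintro ⟨A, hAgood, hωA⟩
      simp only [goodset, Finset.mem_filter, Finset.mem_powerset] at hAgood
      have hXA : ∀ i ∈ Finset.range m, X i ω = chi A i := by
        intro i hi
        have := Set.mem_iInter₂.1 hωA i hi
        exact this
      constructor
      · intro l hl0 hlm
        rw [hsum ω A hXA l hlm]
        have := hAgood.2 l (Finset.mem_Icc.2 ⟨hl0, hlm⟩)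
        have : (l : ℤ) < 2 * ((A ∩ Finset.range l).card : ℤ) := by exact_mod_cast this
        omega
      · apply Set.mem_biInter
        intro i hi
        simp only [Set.mem_preimage]
        rw [hXA i hi]
        unfold chi
        split <;> simp
  -- G has full measure
  have hGc : P Gᶜ = 0 := by
    rw [hG, Set.compl_iInter₂]
    apply le_antisymm _ zero_le
    calc P (⋃ i ∈ Finset.range m, (X i ⁻¹' {1, -1})ᶜ)
        ≤ ∑ i ∈ Finset.range m, P ((X i ⁻¹' {1, -1})ᶜ) := measure_biUnion_finset_le _ _
      _ = 0 := Finset.sum_eq_zero (fun i _ => ?_)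
    rw [prob_compl_eq_zero_iff ((hX i) (by measurability))]
    have hsplit : (X i ⁻¹' {1, -1} : Set Ω) = X i ⁻¹' {1} ∪ X i ⁻¹' {-1} := by
      rw [Set.insert_eq, Set.preimage_union]
    have hd : Disjoint (X i ⁻¹' {1} : Set Ω) (X i ⁻¹' {-1}) := by
      rw [Set.disjoint_left]
      rintro ω (h : X i ω = 1) (h' : X i ω = -1)
      rw [h] at h'
      norm_num at h'
    rw [hsplit, measure_union hd ((hX i) (measurableSet_singleton (-1))),
      hsingle i 1 (Or.inl rfl), hsingle i (-1) (Or.inr rfl), ENNReal.inv_two_add_inv_two]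
  -- P E = P (E ∩ G)
  have hPE : P E = P (E ∩ G) := by
    apply le_antisymm
    · calc P E ≤ P ((E ∩ G) ∪ Gᶜ) := measure_mono (fun ω hω => by
          by_cases hg : ω ∈ G
          · exact Or.inl ⟨hω, hg⟩
          · exact Or.inr hg)
      _ ≤ P (E ∩ G) + P Gᶜ := measure_union_le _ _
      _ = P (E ∩ G) := by rw [hGc, add_zero]
    · exact measure_mono Set.inter_subset_left
  -- disjointness
  have hdisj : (↑(goodset m) : Set (Finset ℕ)).PairwiseDisjoint cyl := by
    intro A hA B hB hne
    simp only [Finset.mem_coe, goodset, Finset.mem_filter, Finset.mem_powerset] at hA hB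
    rw [Function.onFun, Set.disjoint_left]
    intro ω hωA hωB
    apply hne
    ext i
    by_cases hi : i ∈ Finset.range m
    · have hA' := Set.mem_iInter₂.1 hωA i hi
      have hB' := Set.mem_iInter₂.1 hωB i hi
      simp only [Set.mem_preimage, Set.mem_singleton_iff] at hA' hB'
      have : chi A i = chi B i := by rw [← hA', hB']
      unfold chi at this
      by_cases h1 : i ∈ A <;> by_cases h2 : i ∈ B <;> simp [h1, h2] at this ⊢
    · constructor
      · intro h; exact absurd (hA.1 h) hi
      · intro h; exact absurd (hB.1 h) hi
  rw [hPE, hunion, measure_biUnion_finset hdisj (fun A _ => hcylMeas A)]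
  rw [Finset.sum_congr rfl (fun A _ => hcylP A), Finset.sum_const, nsmul_eq_mul]
end Stmt11Aux
namespace Stmt11Aux

lemma fm_eq (m : ℕ) (hm : 1 ≤ m) :
    Real.sqrt m * (((goodset m).card : ℝ) * (2:ℝ)⁻¹ ^ m)
      = (1/2) * (Real.sqrt m / Real.sqrt (2 * (m / 2 : ℕ) + 1)) * wseq (m / 2) := by
  rw [goodset_card hm, wseq]
  have hs : Real.sqrt (2 * (m / 2 : ℕ) + 1) ≠ 0 := ne_of_gt (Real.sqrt_pos.2 (by positivity))
  have hkeyR : 2 * (4:ℝ) ^ (m / 2) * (((m - 1).choose (m / 2) : ℕ) : ℝ)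
      = 2 ^ m * (((2 * (m / 2)).choose (m / 2) : ℕ) : ℝ) := by exact_mod_cast natkey m hm
  have h2m : ((2:ℝ)⁻¹) ^ m = ((2:ℝ) ^ m)⁻¹ := by rw [inv_pow]
  rw [h2m]
  field_simp
  linear_combination hkeyR

end Stmt11Aux

theorem stmt11 {Ω : Type*} [MeasurableSpace Ω] (P : Measure Ω) [IsProbabilityMeasure P]
    (X : ℕ → Ω → ℤ) (hX : ∀ i, Measurable (X i))
    (hindep : iIndepFun X P)
    (h1 : ∀ i, P {ω | X i ω = 1} = 1/2)
    (h2 : ∀ i, P {ω | X i ω = -1} = 1/2)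
    (S : ℕ → Ω → ℤ) (hS : ∀ n ω, S n ω = ∑ i ∈ Finset.range n, X i ω) :
    Tendsto (fun m : ℕ =>
        Real.sqrt m * (P {ω | ∀ l, 0 < l → l ≤ m → S 0 ω < S l ω}).toReal)
      atTop (nhds (1 / Real.sqrt (2 * Real.pi))) := by
  have hsetEq : ∀ m : ℕ, {ω | ∀ l, 0 < l → l ≤ m → S 0 ω < S l ω}
      = {ω | ∀ l, 0 < l → l ≤ m → 0 < ∑ i ∈ Finset.range l, X i ω} := by
    intro m
    ext ω
    simp only [Set.mem_setOf_eq]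
    have h0 : S 0 ω = 0 := by rw [hS]; simp
    constructor <;> intro h l hl1 hl2 <;> have hh := h l hl1 hl2
    · rw [h0, hS] at hh; exact hh
    · rw [h0, hS]; exact hh
  have hPm : ∀ m : ℕ, (P {ω | ∀ l, 0 < l → l ≤ m → S 0 ω < S l ω}).toReal
      = ((Stmt11Aux.goodset m).card : ℝ) * (2:ℝ)⁻¹ ^ m := by
    intro m
    rw [hsetEq m, Stmt11Aux.measure_eq P X hX hindep h1 h2 m]
    rw [ENNReal.toReal_mul, ENNReal.toReal_pow]
    simp
  simp only [hPm]
  have hval : (1/2 : ℝ) * 1 * Real.sqrt (2 / Real.pi) = 1 / Real.sqrt (2 * Real.pi) := by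
    have hπ := Real.pi_pos
    have hsp : (0:ℝ) < Real.sqrt (2 * Real.pi) := Real.sqrt_pos.2 (by positivity)
    have h2π : Real.sqrt (2 * Real.pi) * Real.sqrt (2 / Real.pi) = 2 := by
      rw [← Real.sqrt_mul (by positivity)]
      rw [show 2 * Real.pi * (2 / Real.pi) = 4 by field_simp; ring]
      rw [show (4:ℝ) = 2 ^ 2 by norm_num, Real.sqrt_sq (by norm_num)]
    rw [mul_one, eq_div_iff (ne_of_gt hsp)]
    linear_combination h2π / 2
  have hlim : Tendsto (fun m : ℕ =>
      (1/2 : ℝ) * (Real.sqrt m / Real.sqrt (2 * (m / 2 : ℕ) + 1)) * Stmt11Aux.wseq (m / 2)) atTop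
      (𝓝 ((1/2 : ℝ) * 1 * Real.sqrt (2 / Real.pi))) :=
    (tendsto_const_nhds.mul Stmt11Aux.ratio_tendsto).mul (Stmt11Aux.wseq_tendsto.comp Stmt11Aux.div2_tendsto)
  rw [← hval]
  apply Tendsto.congr' _ hlim
  filter_upwards [eventually_ge_atTop 1] with m hm
  exact (Stmt11Aux.fm_eq m hm).symm
end

section
/- For a simple symmetric random walk on ℤ started at 0, P(S_l ≤ S_t for all 0 ≤ l ≤ t) = C(2m, m)/2^{2m}, where m = t/2 if t is even and m = (t+1)/2 if t is odd. -/
open Finset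
namespace SW

def bval (b : Bool) : ℤ := if b then 1 else -1

def psum (f : ℕ → Bool) (l : ℕ) : ℤ := ∑ i ∈ Finset.range l, bval (f i)

def ext {n : ℕ} (f : Fin n → Bool) : ℕ → Bool := fun i => if h : i < n then f ⟨i, h⟩ else false

lemma ext_lt {n : ℕ} (f : Fin n → Bool) {i : ℕ} (h : i < n) : ext f i = f ⟨i, h⟩ := dif_pos h

-- snoc lemmas
lemma ext_snoc_lt {n : ℕ} (g : Fin n → Bool) (b : Bool) {i : ℕ} (h : i < n) :
    ext (Fin.snoc g b) i = ext g i := by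
  rw [ext_lt _ (Nat.lt_succ_of_lt h), ext_lt _ h]
  have : (⟨i, Nat.lt_succ_of_lt h⟩ : Fin (n+1)) = Fin.castSucc ⟨i, h⟩ := rfl
  rw [this, Fin.snoc_castSucc]

lemma ext_snoc_last {n : ℕ} (g : Fin n → Bool) (b : Bool) :
    ext (Fin.snoc g b) n = b := by
  rw [ext_lt _ (Nat.lt_succ_self n)]
  have : (⟨n, Nat.lt_succ_self n⟩ : Fin (n+1)) = Fin.last n := rfl
  rw [this, Fin.snoc_last]

lemma psum_ext_snoc {n : ℕ} (g : Fin n → Bool) (b : Bool) {l : ℕ} (hl : l ≤ n) :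
    psum (ext (Fin.snoc g b)) l = psum (ext g) l := by
  unfold psum
  exact Finset.sum_congr rfl fun i hi => by
    rw [ext_snoc_lt g b (lt_of_lt_of_le (Finset.mem_range.mp hi) hl)]

lemma psum_ext_snoc_top {n : ℕ} (g : Fin n → Bool) (b : Bool) :
    psum (ext (Fin.snoc g b)) (n+1) = psum (ext g) n + bval b := by
  unfold psum
  rw [Finset.sum_range_succ, ext_snoc_last]
  congr 1
  exact Finset.sum_congr rfl fun i hi => by
    rw [ext_snoc_lt g b (Finset.mem_range.mp hi)]

def ups {n : ℕ} (f : Fin n → Bool) : ℕ := ∑ i : Fin n, (if f i then 1 else 0)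

lemma ups_snoc {n : ℕ} (g : Fin n → Bool) (b : Bool) :
    ups (Fin.snoc g b) = ups g + (if b then 1 else 0) := by
  unfold ups
  rw [Fin.sum_univ_castSucc]
  simp [Fin.snoc_castSucc, Fin.snoc_last]

lemma ups_le {n : ℕ} (f : Fin n → Bool) : ups f ≤ n := by
  have : ups f ≤ ∑ _i : Fin n, 1 := Finset.sum_le_sum (fun i _ => by split <;> omega)
  simpa using this

lemma psum_eq_ups {n : ℕ} (f : Fin n → Bool) :
    psum (ext f) n = 2 * (ups f : ℤ) - n := by
  unfold psum ups
  rw [← Fin.sum_univ_eq_sum_range (fun i => bval (ext f i)) n]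
  push_cast
  have : ∀ i : Fin n, bval (ext f i) = 2 * (if f i then (1:ℤ) else 0) - 1 := by
    intro i
    rw [ext_lt f i.isLt]
    simp only [Fin.eta]
    cases f i <;> simp [bval]
  rw [Finset.sum_congr rfl (fun i _ => this i)]
  rw [Finset.sum_sub_distrib, ← Finset.mul_sum]
  simp

def Qnn (n : ℕ) (f : Fin n → Bool) : Prop := ∀ l ≤ n, 0 ≤ psum (ext f) l
instance (n : ℕ) : DecidablePred (Qnn n) := fun _ => Nat.decidableBallLE n _

lemma card_filter_succ (n : ℕ) (Pp : (Fin (n+1) → Bool) → Prop) [DecidablePred Pp] :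
    (univ.filter Pp).card
      = (univ.filter (fun g : Fin n → Bool => Pp (Fin.snoc g true))).card
        + (univ.filter (fun g : Fin n → Bool => Pp (Fin.snoc g false))).card := by
  have hsplit : univ.filter Pp
      = (univ.filter (fun f => Pp f ∧ f (Fin.last n) = true))
        ∪ (univ.filter (fun f => Pp f ∧ f (Fin.last n) = false)) := by
    ext f
    simp only [mem_filter, mem_union, mem_univ, true_and]
    cases h : f (Fin.last n) <;> tauto
  rw [hsplit, Finset.card_union_of_disjoint]
  · congr 1
    · apply Finset.card_nbij' (fun f => Fin.init f) (fun g => Fin.snoc g true)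
      · intro f hf
        simp only [mem_coe, mem_filter, mem_univ, true_and] at hf ⊢
        have : Fin.snoc (Fin.init f) true = f := by rw [← hf.2]; exact Fin.snoc_init_self f
        rw [this]; exact hf.1
      · intro g hg
        simp only [mem_coe, mem_filter, mem_univ, true_and] at hg ⊢
        exact ⟨hg, Fin.snoc_last _ _⟩
      · intro f hf
        simp only [mem_coe, mem_filter, mem_univ, true_and] at hf
        rw [← hf.2]; exact Fin.snoc_init_self f
      · intro g _
        exact Fin.init_snoc _ _
    · apply Finset.card_nbij' (fun f => Fin.init f) (fun g => Fin.snoc g false)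
      · intro f hf
        simp only [mem_coe, mem_filter, mem_univ, true_and] at hf ⊢
        have : Fin.snoc (Fin.init f) false = f := by rw [← hf.2]; exact Fin.snoc_init_self f
        rw [this]; exact hf.1
      · intro g hg
        simp only [mem_coe, mem_filter, mem_univ, true_and] at hg ⊢
        exact ⟨hg, Fin.snoc_last _ _⟩
      · intro f hf
        simp only [mem_coe, mem_filter, mem_univ, true_and] at hf
        rw [← hf.2]; exact Fin.snoc_init_self f
      · intro g _
        exact Fin.init_snoc _ _
  · rw [Finset.disjoint_filter]
    rintro f - ⟨-, h⟩ ⟨-, h'⟩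
    rw [h] at h'; exact Bool.noConfusion h'


def cnt (n k : ℕ) : ℕ := (univ.filter (fun f : Fin n → Bool => Qnn n f ∧ ups f = k)).card

lemma Qnn_snoc_true {n : ℕ} (g : Fin n → Bool) :
    Qnn (n+1) (Fin.snoc g true) ↔ Qnn n g := by
  constructor
  · intro h l hl
    have := h l (le_trans hl (Nat.le_succ n))
    rwa [psum_ext_snoc g true hl] at this
  · intro h l hl
    rcases Nat.lt_or_ge l (n+1) with h' | h'
    · rw [psum_ext_snoc g true (Nat.lt_succ_iff.mp h')]
      exact h _ (Nat.lt_succ_iff.mp h')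
    · have hln : l = n + 1 := le_antisymm hl h'
      subst hln
      rw [psum_ext_snoc_top]
      have := h n le_rfl
      have hb : bval true = 1 := rfl
      omega
  
lemma Qnn_snoc_false {n : ℕ} (g : Fin n → Bool) :
    Qnn (n+1) (Fin.snoc g false) ↔ (Qnn n g ∧ 1 ≤ psum (ext g) n) := by
  constructor
  · intro h
    constructor
    · intro l hl
      have := h l (le_trans hl (Nat.le_succ n))
      rwa [psum_ext_snoc g false hl] at this
    · have := h (n+1) le_rfl
      rw [psum_ext_snoc_top] at this
      have hb : bval false = -1 := rfl
      omega
  · rintro ⟨h, h'⟩ l hl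
    rcases Nat.lt_or_ge l (n+1) with hlt | hge
    · rw [psum_ext_snoc g false (Nat.lt_succ_iff.mp hlt)]
      exact h _ (Nat.lt_succ_iff.mp hlt)
    · have hln : l = n + 1 := le_antisymm hl hge
      subst hln
      rw [psum_ext_snoc_top]
      have hb : bval false = -1 := rfl
      omega

lemma cnt_succ_zero (n : ℕ) : cnt (n+1) 0 = 0 := by
  unfold cnt
  rw [Finset.card_eq_zero, Finset.filter_eq_empty_iff]
  rintro f -
  rintro ⟨hq, hu⟩
  have h1 := hq (n+1) le_rfl
  have h2 := psum_eq_ups f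
  rw [hu] at h2
  rw [h2] at h1
  push_cast at h1
  omega

lemma cnt_zero (k : ℕ) : cnt 0 k = if k = 0 then 1 else 0 := by
  unfold cnt
  have huniv : (univ : Finset (Fin 0 → Bool)).card = 1 := by simp
  split
  · subst ‹k = 0›
    rw [Finset.filter_true_of_mem, huniv]
    intro f _
    refine ⟨fun l hl => ?_, ?_⟩
    · interval_cases l
      simp [psum]
    · simp [ups]
  · rw [Finset.card_eq_zero, Finset.filter_eq_empty_iff]
    rintro f -
    rintro ⟨-, hu⟩
    simp [ups] at hu
    omega

lemma cnt_succ (n k : ℕ) :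
    cnt (n+1) (k+1) = cnt n k + (if n < 2*(k+1) then cnt n (k+1) else 0) := by
  unfold cnt
  rw [card_filter_succ n (fun f => Qnn (n+1) f ∧ ups f = k+1)]
  congr 1
  · apply congrArg Finset.card
    ext g
    simp only [mem_filter, mem_univ, true_and, Qnn_snoc_true, ups_snoc]
    constructor
    · rintro ⟨h1, h2⟩
      refine ⟨h1, by simp at h2; omega⟩
    · rintro ⟨h1, h2⟩
      refine ⟨h1, by simp; omega⟩
  · split
    · rename_i hlt
      apply congrArg Finset.card
      ext g
      simp only [mem_filter, mem_univ, true_and, Qnn_snoc_false, ups_snoc]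
      constructor
      · rintro ⟨⟨h1, -⟩, h2⟩
        refine ⟨h1, by simp at h2; omega⟩
      · rintro ⟨h1, h2⟩
        have hp := psum_eq_ups g
        rw [h2] at hp
        refine ⟨⟨h1, by push_cast at hp; omega⟩, by simp; omega⟩
    · rename_i hge
      rw [Finset.card_eq_zero, Finset.filter_eq_empty_iff]
      rintro g - ⟨hq, hu⟩
      have h1 := (Qnn_snoc_false g).mp hq
      have hu' : ups g = k + 1 := by
        rw [ups_snoc] at hu; simp at hu; omega
      have hp := psum_eq_ups g
      rw [hu'] at hp
      rw [hp] at h1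
      push_cast at h1
      omega

def Fcl (n k : ℕ) : ℕ := Nat.choose n k - Nat.choose n (k+1)

lemma choose_anti {n k : ℕ} (h : n ≤ 2*k + 1) : Nat.choose n (k+1) ≤ Nat.choose n k := by
  have hid := Nat.choose_succ_right_eq n k
  have h1 : Nat.choose n (k+1) * (k+1) ≤ Nat.choose n k * (k+1) := by
    rw [hid]
    exact Nat.mul_le_mul_left _ (by omega)
  exact Nat.le_of_mul_le_mul_right h1 (Nat.succ_pos k)

lemma choose_mono {n k : ℕ} (h : 2*k < n) : Nat.choose n k ≤ Nat.choose n (k+1) := by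
  have hid := Nat.choose_succ_right_eq n k
  have h1 : Nat.choose n k * (k+1) ≤ Nat.choose n (k+1) * (k+1) := by
    rw [hid]
    exact Nat.mul_le_mul_left _ (by omega)
  exact Nat.le_of_mul_le_mul_right h1 (Nat.succ_pos k)

lemma Fcl_zero_of_lt {n k : ℕ} (h : 2*k < n) : Fcl n k = 0 :=
  Nat.sub_eq_zero_of_le (choose_mono h)

lemma cnt_eq_Fcl : ∀ n k, cnt n k = Fcl n k := by
  intro n
  induction n with
  | zero =>
    intro k
    rw [cnt_zero]
    cases k with
    | zero => simp [Fcl]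
    | succ k => simp [Fcl, Nat.choose_zero_succ]
  | succ n ih =>
    intro k
    cases k with
    | zero =>
      rw [cnt_succ_zero]
      unfold Fcl
      rw [Nat.choose_zero_right, Nat.choose_one_right]
      omega
    | succ k =>
      rw [cnt_succ, ih k, ih (k+1)]
      unfold Fcl
      rw [show k + 1 + 1 = k + 2 from rfl]
      split
      · rename_i hlt
        -- n < 2*(k+1), i.e. n ≤ 2k+1
        have h1 : Nat.choose n (k+1) ≤ Nat.choose n k := choose_anti (by omega)
        have h2 : Nat.choose n (k+2) ≤ Nat.choose n (k+1) := choose_anti (by omega)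
        have hp1 : Nat.choose (n+1) (k+1) = Nat.choose n k + Nat.choose n (k+1) :=
          Nat.choose_succ_succ n k
        have hp2 : Nat.choose (n+1) (k+2) = Nat.choose n (k+1) + Nat.choose n (k+2) :=
          Nat.choose_succ_succ n (k+1)
        omega
      · rename_i hge
        -- 2*(k+1) ≤ n
        have h0 : Nat.choose n k ≤ Nat.choose n (k+1) := choose_mono (by omega)
        have h1 : Nat.choose (n+1) (k+1) ≤ Nat.choose (n+1) (k+2) := choose_mono (by omega)
        omega

lemma sum_Fcl (n : ℕ) : ∑ k ∈ Finset.range (n+1), Fcl n k = Nat.choose n ((n+1)/2) := by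
  set k0 := (n+1)/2 with hk0
  have hk0n : k0 ≤ n + 1 := by omega
  rw [← Finset.sum_range_add_sum_Ico _ hk0n]
  have hz : ∑ k ∈ Finset.range k0, Fcl n k = 0 := by
    apply Finset.sum_eq_zero
    intro k hk
    rw [Finset.mem_range] at hk
    exact Fcl_zero_of_lt (by omega)
  rw [hz, zero_add]
  have : ∀ k ∈ Finset.Ico k0 (n+1), (Fcl n k : ℤ) = (Nat.choose n k : ℤ) - Nat.choose n (k+1) := by
    intro k hk
    rw [Finset.mem_Ico] at hk
    unfold Fcl
    have : Nat.choose n (k+1) ≤ Nat.choose n k := choose_anti (by omega)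
    push_cast [Nat.cast_sub this]
    ring
  have hcast : ((∑ k ∈ Finset.Ico k0 (n+1), Fcl n k : ℕ) : ℤ) = Nat.choose n k0 := by
    push_cast
    rw [Finset.sum_congr rfl this, Finset.sum_Ico_eq_sum_range]
    have hre : ∀ j, ((Nat.choose n (k0 + j) : ℤ) - Nat.choose n (k0 + j + 1))
        = (fun j => (Nat.choose n (k0 + j) : ℤ)) j - (fun j => (Nat.choose n (k0 + j) : ℤ)) (j+1) := by
      intro j; simp [add_assoc]
    rw [Finset.sum_congr rfl (fun j _ => hre j), Finset.sum_range_sub']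
    have : k0 + (n + 1 - k0) = n + 1 := by omega
    rw [this]
    simp [Nat.choose_succ_self]
  exact_mod_cast hcast

lemma card_Qnn (n : ℕ) :
    (univ.filter (Qnn n)).card = Nat.choose n ((n+1)/2) := by
  rw [Finset.card_eq_sum_card_fiberwise (f := fun f => ups f) (t := Finset.range (n+1))
    (fun f _ => Finset.mem_range.mpr (Nat.lt_succ_of_le (ups_le f)))]
  rw [← sum_Fcl n]
  apply Finset.sum_congr rfl
  intro k _
  rw [Finset.filter_filter]
  exact cnt_eq_Fcl n k

def Qmax (n : ℕ) (f : Fin n → Bool) : Prop := ∀ l ≤ n, psum (ext f) l ≤ psum (ext f) n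
instance (n : ℕ) : DecidablePred (Qmax n) := fun _ => Nat.decidableBallLE n _

lemma psum_rev {n : ℕ} (f : Fin n → Bool) {l : ℕ} (hl : l ≤ n) :
    psum (ext f) n - psum (ext f) l = psum (ext (f ∘ Fin.rev)) (n - l) := by
  unfold psum
  rw [← Finset.sum_Ico_eq_sub _ hl]
  rw [Finset.sum_Ico_eq_sum_range]
  rw [← Finset.sum_range_reflect]
  apply Finset.sum_congr rfl
  intro j hj
  rw [Finset.mem_range] at hj
  have hjn : j < n := lt_of_lt_of_le hj (Nat.sub_le n l)
  have h1 : l + (n - l - 1 - j) = n - 1 - j := by omega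
  rw [h1]
  have h2 : n - 1 - j < n := by omega
  rw [ext_lt f h2, ext_lt (f ∘ Fin.rev) hjn]
  congr 1
  apply congrArg
  apply Fin.ext
  rw [Fin.val_rev]
  simp
  omega

lemma Qmax_iff {n : ℕ} (f : Fin n → Bool) : Qmax n f ↔ Qnn n (f ∘ Fin.rev) := by
  constructor
  · intro h l hl
    have h2 := psum_rev f (Nat.sub_le n l)
    have h3 : n - (n - l) = l := by omega
    rw [h3] at h2
    have := h (n - l) (Nat.sub_le n l)
    omega
  · intro h l hl
    have h2 := psum_rev f hl
    have := h (n - l) (Nat.sub_le n l)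
    omega

lemma comp_rev_comp_rev {n : ℕ} (f : Fin n → Bool) : (f ∘ Fin.rev) ∘ Fin.rev = f := by
  funext i
  simp [Function.comp, Fin.rev_rev]

lemma card_Qmax (n : ℕ) :
    (univ.filter (Qmax n)).card = Nat.choose n ((n+1)/2) := by
  rw [← card_Qnn n]
  apply Finset.card_nbij' (fun f => f ∘ Fin.rev) (fun f => f ∘ Fin.rev)
  · intro f hf
    simp only [mem_coe, mem_filter, mem_univ, true_and] at hf ⊢
    exact (Qmax_iff f).mp hf
  · intro f hf
    simp only [mem_coe, mem_filter, mem_univ, true_and] at hf ⊢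
    rw [Qmax_iff, comp_rev_comp_rev]
    exact hf
  · intro f _
    exact comp_rev_comp_rev f
  · intro f _
    exact comp_rev_comp_rev f

end SW

open MeasureTheory ProbabilityTheory Filter

theorem stmt12 {Ω : Type*} [MeasurableSpace Ω] (P : Measure Ω) [IsProbabilityMeasure P]
    (X : ℕ → Ω → ℤ) (hX : ∀ i, Measurable (X i))
    (hindep : iIndepFun X P)
    (h1 : ∀ i, P {ω | X i ω = 1} = 1/2)
    (h2 : ∀ i, P {ω | X i ω = -1} = 1/2)
    (S : ℕ → Ω → ℤ) (hS : ∀ n ω, S n ω = ∑ i ∈ Finset.range n, X i ω)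
    (t m : ℕ) (hmeven : Even t → m = t / 2) (hmodd : Odd t → m = (t + 1) / 2) :
    (P {ω | ∀ l ≤ t, S l ω ≤ S t ω}).toReal
      = ((2 * m).choose m : ℝ) / 2 ^ (2 * m) := by
  classical
  set A : Finset (Fin t → Bool) := Finset.univ.filter (SW.Qmax t) with hA
  set cyl : (Fin t → Bool) → Set Ω :=
    fun b => ⋂ i ∈ Finset.range t, X i ⁻¹' {SW.bval (SW.ext b i)} with hcyl
  set E : Set Ω := {ω | ∀ l ≤ t, S l ω ≤ S t ω} with hE
  have hmeas_cyl : ∀ b, MeasurableSet (cyl b) := by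
    intro b
    exact MeasurableSet.biInter (Set.to_countable _)
      (fun i _ => (hX i) (measurableSet_singleton _))
  have hmem_cyl : ∀ (b : Fin t → Bool) (ω : Ω),
      ω ∈ cyl b ↔ ∀ i ∈ Finset.range t, X i ω = SW.bval (SW.ext b i) := by
    intro b ω
    rw [hcyl]
    simp only [Set.mem_iInter, Set.mem_preimage, Set.mem_singleton_iff]
  have hsingle : ∀ (i : ℕ) (b : Bool), P (X i ⁻¹' {SW.bval b}) = 2⁻¹ := by
    intro i b
    cases b
    · have : X i ⁻¹' {SW.bval false} = {ω | X i ω = -1} := by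
        ext ω; simp [SW.bval]
      rw [this, h2 i, one_div]
    · have : X i ⁻¹' {SW.bval true} = {ω | X i ω = 1} := by
        ext ω; simp [SW.bval]
      rw [this, h1 i, one_div]
  have hPcyl : ∀ b, P (cyl b) = 2⁻¹ ^ t := by
    intro b
    rw [hcyl]
    rw [hindep.measure_inter_preimage_eq_mul (Finset.range t)
      (sets := fun i => {SW.bval (SW.ext b i)}) (fun i _ => measurableSet_singleton _)]
    rw [Finset.prod_congr rfl (fun i _ => hsingle i (SW.ext b i))]
    simp
  set bad : Set Ω := ⋃ i ∈ Finset.range t, ({ω | X i ω = 1} ∪ {ω | X i ω = -1})ᶜ with hbad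
  have hbadnull : P bad = 0 := by
    rw [hbad]
    refine le_antisymm (le_trans (measure_biUnion_finset_le _ _) ?_) zero_le
    have hz : ∀ i ∈ Finset.range t, P (({ω | X i ω = 1} ∪ {ω | X i ω = -1})ᶜ) = 0 := by
      intro i _
      have hm1 : MeasurableSet {ω | X i ω = 1} := (hX i) (measurableSet_singleton 1)
      have hm2 : MeasurableSet {ω | X i ω = -1} := (hX i) (measurableSet_singleton (-1))
      have hdisj : Disjoint {ω | X i ω = 1} {ω | X i ω = -1} := by
        rw [Set.disjoint_left]
        intro ω hω1 hω2
        simp only [Set.mem_setOf_eq] at hω1 hω2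
        rw [hω1] at hω2; exact absurd hω2 (by norm_num)
      rw [prob_compl_eq_one_sub (hm1.union hm2), measure_union hdisj hm2, h1 i, h2 i,
        one_div, ENNReal.inv_two_add_inv_two, tsub_self]
    rw [Finset.sum_congr rfl hz]
    simp
  have hScyl : ∀ (b : Fin t → Bool) (ω : Ω), ω ∈ cyl b →
      ∀ l ≤ t, S l ω = SW.psum (SW.ext b) l := by
    intro b ω hω l hl
    rw [hS, SW.psum]
    apply Finset.sum_congr rfl
    intro i hi
    exact (hmem_cyl b ω).mp hω i
      (Finset.mem_range.mpr (lt_of_lt_of_le (Finset.mem_range.mp hi) hl))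
  have hcyl_notbad : ∀ (b : Fin t → Bool) (ω : Ω), ω ∈ cyl b → ω ∉ bad := by
    intro b ω hω hωbad
    rw [hbad] at hωbad
    obtain ⟨i, hi, hωi⟩ := Set.mem_iUnion₂.mp hωbad
    have := (hmem_cyl b ω).mp hω i hi
    apply hωi
    cases h : SW.ext b i
    · right; rw [h] at this; exact this
    · left; rw [h] at this; exact this
  have hEdecomp : E \ bad = ⋃ b ∈ A, cyl b := by
    ext ω
    constructor
    · rintro ⟨hωE, hωbad⟩
      have hval : ∀ i ∈ Finset.range t, X i ω = 1 ∨ X i ω = -1 := by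
        intro i hi
        by_contra hcon
        push_neg at hcon
        exact hωbad (Set.mem_iUnion₂.mpr ⟨i, hi, by
          simp only [Set.mem_compl_iff, Set.mem_union, Set.mem_setOf_eq]
          push_neg
          exact hcon⟩)
      set b : Fin t → Bool := fun i => if X i.val ω = 1 then true else false with hb
      have hωcyl : ω ∈ cyl b := by
        rw [hmem_cyl]
        intro i hi
        have hit := Finset.mem_range.mp hi
        rw [SW.ext_lt b hit, hb]
        rcases hval i hi with h | h
        · simp only [h, if_pos rfl]; rfl
        · have hne : X i ω ≠ 1 := by rw [h]; norm_num
          simp only [if_neg hne]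
          rw [h]; rfl
      have hQ : SW.Qmax t b := by
        intro l hl
        have h1' := hScyl b ω hωcyl l hl
        have h2' := hScyl b ω hωcyl t le_rfl
        have := hωE l hl
        rw [h1', h2'] at this
        exact this
      exact Set.mem_iUnion₂.mpr ⟨b, Finset.mem_filter.mpr ⟨Finset.mem_univ _, hQ⟩, hωcyl⟩
    · intro hω
      obtain ⟨b, hbA, hωcyl⟩ := Set.mem_iUnion₂.mp hω
      have hQ : SW.Qmax t b := (Finset.mem_filter.mp hbA).2
      refine ⟨?_, hcyl_notbad b ω hωcyl⟩
      intro l hl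
      rw [hScyl b ω hωcyl l hl, hScyl b ω hωcyl t le_rfl]
      exact hQ l hl
  have hdisjcyl : (A : Set (Fin t → Bool)).PairwiseDisjoint cyl := by
    intro b _ b' _ hne
    rw [Function.onFun, Set.disjoint_left]
    intro ω hω hω'
    apply hne
    funext i
    have e1 := (hmem_cyl b ω).mp hω i.val (Finset.mem_range.mpr i.isLt)
    have e2 := (hmem_cyl b' ω).mp hω' i.val (Finset.mem_range.mpr i.isLt)
    rw [SW.ext_lt b i.isLt] at e1
    rw [SW.ext_lt b' i.isLt] at e2
    simp only [Fin.eta] at e1 e2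
    rw [e1] at e2
    cases hbi : b i <;> cases hbi' : b' i <;> rw [hbi, hbi'] at e2 <;>
      simp [SW.bval] at e2 ⊢
  have hPE : P E = A.card * 2⁻¹ ^ t := by
    calc P E = P (E \ bad) := (measure_diff_null hbadnull).symm
    _ = P (⋃ b ∈ A, cyl b) := by rw [hEdecomp]
    _ = ∑ b ∈ A, P (cyl b) := measure_biUnion_finset hdisjcyl (fun b _ => hmeas_cyl b)
    _ = ∑ _b ∈ A, 2⁻¹ ^ t := Finset.sum_congr rfl (fun b _ => hPcyl b)
    _ = A.card * 2⁻¹ ^ t := by rw [Finset.sum_const, nsmul_eq_mul]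
  have hcard : A.card = Nat.choose t ((t+1)/2) := SW.card_Qmax t
  rw [hPE, hcard]
  rw [ENNReal.toReal_mul, ENNReal.toReal_pow, ENNReal.toReal_inv]
  simp only [ENNReal.toReal_natCast, ENNReal.toReal_ofNat]
  rcases Nat.even_or_odd t with he | ho
  · have hm := hmeven he
    obtain ⟨a, ha⟩ := he
    have h2m : 2 * m = t := by omega
    have hk : (t+1)/2 = m := by omega
    rw [hk, h2m]
    rw [div_eq_mul_inv, inv_pow]
  · have hm := hmodd ho
    obtain ⟨a, ha⟩ := ho
    have hm' : m = a + 1 := by omega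
    have hk : (t+1)/2 = a + 1 := by omega
    have hchoose : Nat.choose (2*m) m = 2 * Nat.choose t ((t+1)/2) := by
      rw [hk, hm', ha]
      have hp : Nat.choose (2*(a+1)) (a+1) = Nat.choose (2*a+1) a + Nat.choose (2*a+1) (a+1) := by
        rw [show 2*(a+1) = (2*a+1)+1 from by ring]
        exact Nat.choose_succ_succ (2*a+1) a
      have hs : Nat.choose (2*a+1) a = Nat.choose (2*a+1) (a+1) := by
        have := Nat.choose_symm (n := 2*a+1) (k := a+1) (by omega)
        rw [show 2*a+1-(a+1) = a from by omega] at this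
        exact this
      omega
    rw [hchoose]
    have h2m : 2 * m = t + 1 := by omega
    rw [h2m]
    push_cast
    rw [pow_succ, inv_pow]
    field_simp
end

section
/- Let α⁺(n) and α⁻(n) be the numbers of rarely visited edges (edges traversed exactly once up to time n) lying on the nonnegative and nonpositive half-axes respectively, for a simple symmetric random walk started at 0. Then α⁺(n)·α⁻(n) = 0 for every n, i.e., at any time all rarely visited edges lie on one side of the origin. -/
open MeasureTheory ProbabilityTheory Filter

lemma cross_parity (s : ℕ → ℤ) (h0 : s 0 = 0)
    (hstep : ∀ k, s (k+1) = s k + 1 ∨ s (k+1) = s k - 1) (z : ℤ) (hz : 0 ≤ z) :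
    ∀ n, ((Finset.Icc 1 n).filter (fun k =>
      (s (k-1) = z ∧ s k = z+1) ∨ (s (k-1) = z+1 ∧ s k = z))).card % 2
      = (if z < s n then 1 else 0) := by
  intro n
  induction n with
  | zero =>
    have : ¬ z < s 0 := by rw [h0]; omega
    simp [this]
  | succ n ih =>
    have hins : Finset.Icc 1 (n+1) = insert (n+1) (Finset.Icc 1 n) := by
      ext k; simp [Finset.mem_Icc, Finset.mem_insert]; omega
    rw [hins, Finset.filter_insert]
    have hnot : (n+1) ∉ Finset.Icc 1 n := by simp
    have hs := hstep n
    by_cases hc : (s ((n+1)-1) = z ∧ s (n+1) = z+1) ∨ (s ((n+1)-1) = z+1 ∧ s (n+1) = z)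
    · rw [if_pos hc, Finset.card_insert_of_notMem (fun h => hnot (Finset.mem_of_mem_filter _ h))]
      simp only [Nat.add_sub_cancel] at hc
      rcases hc with ⟨ha, hb⟩ | ⟨ha, hb⟩
      · have h1 : ¬ z < s n := by omega
        have h2 : z < s (n+1) := by omega
        rw [if_pos h2]; rw [if_neg h1] at ih; omega
      · have h1 : z < s n := by omega
        have h2 : ¬ z < s (n+1) := by omega
        rw [if_neg h2]; rw [if_pos h1] at ih; omega
    · rw [if_neg hc]
      simp only [Nat.add_sub_cancel] at hc
      push_neg at hc
      have hiff : z < s (n+1) ↔ z < s n := by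
        obtain ⟨hc1, hc2⟩ := hc
        rcases hs with h | h <;> constructor <;> intro <;> omega
      rw [if_congr hiff rfl rfl]
      exact ih

/-- If the edge ⟨z, z+1⟩ with z ≥ 0 is crossed an odd number of times, the walk is above z. -/
lemma cross_pos (s : ℕ → ℤ) (h0 : s 0 = 0)
    (hstep : ∀ k, s (k+1) = s k + 1 ∨ s (k+1) = s k - 1) (z : ℤ) (hz : 0 ≤ z) (n : ℕ)
    (h : ((Finset.Icc 1 n).filter (fun k =>
      (s (k-1) = z ∧ s k = z+1) ∨ (s (k-1) = z+1 ∧ s k = z))).card = 1) :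
    z < s n := by
  have := cross_parity s h0 hstep z hz n
  rw [h] at this
  by_contra hcon
  rw [if_neg hcon] at this
  omega

/-- If the edge ⟨z-1, z⟩ with z ≤ 0 is crossed an odd number of times, the walk is below z. -/
lemma cross_neg (s : ℕ → ℤ) (h0 : s 0 = 0)
    (hstep : ∀ k, s (k+1) = s k + 1 ∨ s (k+1) = s k - 1) (z : ℤ) (hz : z ≤ 0) (n : ℕ)
    (h : ((Finset.Icc 1 n).filter (fun k =>
      (s (k-1) = z-1 ∧ s k = (z-1)+1) ∨ (s (k-1) = (z-1)+1 ∧ s k = z-1))).card = 1) :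
    s n < z := by
  have hstep' : ∀ k, (-s (k+1)) = (-s k) + 1 ∨ (-s (k+1)) = (-s k) - 1 := by
    intro k; rcases hstep k with h' | h' <;> [right; left] <;> omega
  have heq : ∀ k : ℕ, (((-s (k-1)) = -z ∧ (-s k) = -z+1) ∨ ((-s (k-1)) = -z+1 ∧ (-s k) = -z))
      ↔ ((s (k-1) = z-1 ∧ s k = (z-1)+1) ∨ (s (k-1) = (z-1)+1 ∧ s k = z-1)) := by
    intro k; constructor <;> intro h' <;> rcases h' with ⟨ha, hb⟩ | ⟨ha, hb⟩ <;>
      [right; left; right; left] <;> omega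
  have h' : ((Finset.Icc 1 n).filter (fun k =>
      ((-s (k-1)) = -z ∧ (-s k) = -z+1) ∨ ((-s (k-1)) = -z+1 ∧ (-s k) = -z))).card = 1 := by
    rw [Finset.filter_congr (fun k _ => heq k)]
    exact h
  have h2 := cross_pos (fun k => -s k) (by simp [h0]) hstep' (-z) (by omega) n h'
  have h3 : -z < -s n := h2
  omega

theorem stmt19 {Ω : Type*} [MeasurableSpace Ω] (P : Measure Ω) [IsProbabilityMeasure P]
    (X : ℕ → Ω → ℤ) (hX : ∀ i, Measurable (X i))
    (hindep : iIndepFun X P)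
    (h1 : ∀ i, P {ω | X i ω = 1} = 1/2)
    (h2 : ∀ i, P {ω | X i ω = -1} = 1/2)
    (S : ℕ → Ω → ℤ) (hS : ∀ n ω, S n ω = ∑ i ∈ Finset.range n, X i ω)
    (L : ℤ → ℕ → Ω → ℕ)
    (hL : ∀ y n ω, L y n ω = ((Finset.Icc 1 n).filter (fun k =>
        (S (k-1) ω = y ∧ S k ω = y+1) ∨ (S (k-1) ω = y+1 ∧ S k ω = y))).card)
    (αp αm : ℕ → Ω → ℕ)
    (hαp : ∀ n ω, αp n ω = Set.ncard {z : ℤ | 0 ≤ z ∧ L z n ω = 1})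
    (hαm : ∀ n ω, αm n ω = Set.ncard {z : ℤ | z ≤ 0 ∧ L (z - 1) n ω = 1}) :
    P {ω | ∀ n, αp n ω * αm n ω = 0} = 1 := by
  set A : ℕ → Set Ω := fun i => {ω | X i ω = 1 ∨ X i ω = -1} with hA
  have hAmeas : ∀ i, MeasurableSet (A i) := by
    intro i
    have : A i = X i ⁻¹' {1, -1} := by ext ω; simp [hA]
    rw [this]
    exact (hX i) (by measurability)
  have hAone : ∀ i, P (A i) = 1 := by
    intro i
    have hdisj : Disjoint {ω | X i ω = 1} {ω | X i ω = -1} := by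
      rw [Set.disjoint_left]; intro ω hω1 hω2
      simp only [Set.mem_setOf_eq] at hω1 hω2; omega
    have hm2 : MeasurableSet {ω | X i ω = -1} := (hX i) (measurableSet_singleton (-1))
    have : A i = {ω | X i ω = 1} ∪ {ω | X i ω = -1} := rfl
    rw [this, measure_union hdisj hm2, h1 i, h2 i, ENNReal.div_add_div_same,
      one_add_one_eq_two]
    exact ENNReal.div_self (by norm_num) (by norm_num)
  have hIA : P (⋂ i, A i) = 1 := by
    have hc : P ((⋂ i, A i)ᶜ) = 0 := by
      rw [Set.compl_iInter]
      refine measure_iUnion_null fun i => ?_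
      have := measure_compl (hAmeas i) (measure_ne_top P _)
      rw [hAone i, measure_univ] at this
      simpa using this
    have hmc := measure_compl (MeasurableSet.iInter hAmeas) (measure_ne_top P _)
    rw [hc, measure_univ] at hmc
    exact le_antisymm prob_le_one (tsub_eq_zero_iff_le.mp hmc.symm)
  refine le_antisymm prob_le_one ?_
  rw [← hIA]
  refine measure_mono fun ω hω => ?_
  simp only [Set.mem_setOf_eq]
  intro n
  have hω' : ∀ i, X i ω = 1 ∨ X i ω = -1 := by
    intro i; exact Set.mem_iInter.mp hω i
  have h0 : S 0 ω = 0 := by simp [hS]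
  have hstep : ∀ k, S (k+1) ω = S k ω + 1 ∨ S (k+1) ω = S k ω - 1 := by
    intro k
    have : S (k+1) ω = S k ω + X k ω := by
      rw [hS, hS, Finset.sum_range_succ]
    rcases hω' k with h' | h' <;> [left; right] <;> omega
  rcases Set.eq_empty_or_nonempty {z : ℤ | 0 ≤ z ∧ L z n ω = 1} with he | ⟨z, hz0, hz1⟩
  · rw [hαp, he, Set.ncard_empty, Nat.zero_mul]
  · have hzlt : z < S n ω := by
      refine cross_pos (fun k => S k ω) h0 hstep z hz0 n ?_
      rw [hL] at hz1; exact hz1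
    have he2 : {z : ℤ | z ≤ 0 ∧ L (z - 1) n ω = 1} = ∅ := by
      ext z'
      simp only [Set.mem_setOf_eq, Set.mem_empty_iff_false, iff_false, not_and]
      intro hz'0 hz'1
      have : S n ω < z' := by
        refine cross_neg (fun k => S k ω) h0 hstep z' hz'0 n ?_
        rw [hL] at hz'1
        exact hz'1
      omega
    rw [hαm, he2, Set.ncard_empty, Nat.mul_zero]
end
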